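/- arXiv:1208.5939 — 9 statements merged into one kernel-verified Lean document; each statement's English description precedes it below -/
import Mathlib

section
/- For all real numbers β ≥ γ ≥ 0, the equation sinh²(2s) + sinh²(s) = sinh²(β) + sinh²(γ) has a unique solution s in the interval [0,∞); moreover, this solution satisfies s ≥ β/4. -/
open Real

theorem unique_s_solution (β γ : ℝ) (hβγ : γ ≤ β) (hγ : 0 ≤ γ) :
    (∃! s : ℝ, 0 ≤ s ∧
        sinh (2 * s) ^ 2 + sinh s ^ 2 = sinh β ^ 2 + sinh γ ^ 2) ∧
    ∀ s : ℝ, 0 ≤ s →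
        sinh (2 * s) ^ 2 + sinh s ^ 2 = sinh β ^ 2 + sinh γ ^ 2 →
        β / 4 ≤ s := by
  have hβ : (0:ℝ) ≤ β := le_trans hγ hβγ
  have hsn : ∀ x : ℝ, 0 ≤ x → 0 ≤ sinh x := by
    intro x hx
    rw [← Real.sinh_zero]
    exact Real.sinh_le_sinh.mpr hx
  set f : ℝ → ℝ := fun s => sinh (2 * s) ^ 2 + sinh s ^ 2 with hf
  have hmono : StrictMonoOn f (Set.Ici 0) := by
    intro a ha b hb hab
    simp only [Set.mem_Ici] at ha hb
    have h1 : sinh a < sinh b := Real.sinh_lt_sinh.mpr hab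
    have h2 : sinh (2*a) < sinh (2*b) := Real.sinh_lt_sinh.mpr (by linarith)
    have h3 : 0 ≤ sinh a := hsn a ha
    have h4 : 0 ≤ sinh (2*a) := hsn _ (by linarith)
    have := pow_lt_pow_left₀ h1 h3 (two_ne_zero)
    have := pow_lt_pow_left₀ h2 h4 (two_ne_zero)
    simp only [hf]
    linarith
  have hcont : Continuous f := by
    continuity
  set c : ℝ := sinh β ^ 2 + sinh γ ^ 2 with hc
  -- f 0 ≤ c ≤ f β
  have hf0 : f 0 = 0 := by simp [hf]
  have hsγ : 0 ≤ sinh γ := hsn _ hγ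
  have hsβ : 0 ≤ sinh β := hsn _ hβ
  have hγβ : sinh γ ≤ sinh β := Real.sinh_le_sinh.mpr hβγ
  have hβ2β : sinh β ≤ sinh (2*β) := Real.sinh_le_sinh.mpr (by linarith)
  have hc0 : 0 ≤ c := by positivity
  have hcβ : c ≤ f β := by
    simp only [hf, hc]
    nlinarith [sq_nonneg (sinh β), sq_nonneg (sinh (2*β))]
  obtain ⟨s, hs, hfs⟩ : ∃ s ∈ Set.Icc 0 β, f s = c := by
    apply intermediate_value_Icc hβ hcont.continuousOn
    constructor
    · rw [hf0]; exact hc0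
    · exact hcβ
  have hs0 : 0 ≤ s := hs.1
  -- key bound : f (β/4) ≤ c
  have hkey : f (β/4) ≤ c := by
    simp only [hf, hc]
    have h2 : 2 * (β/4) = β/2 := by ring
    rw [h2]
    have hβeq : sinh β = 2 * sinh (β/2) * cosh (β/2) := by
      rw [show β = 2 * (β/2) by ring, Real.sinh_two_mul]
      ring_nf
    have hch : 1 ≤ cosh (β/2) := Real.one_le_cosh _
    have h14 : sinh (β/4) ≤ sinh (β/2) := Real.sinh_le_sinh.mpr (by linarith)
    have h14n : 0 ≤ sinh (β/4) := hsn _ (by linarith)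
    have hsq : sinh (β/4)^2 ≤ sinh (β/2)^2 := pow_le_pow_left₀ h14n h14 2
    have h4 : 4 * sinh (β/2)^2 ≤ sinh β ^ 2 := by
      nlinarith [mul_nonneg (sq_nonneg (sinh (β/2))) (by nlinarith : (0:ℝ) ≤ cosh (β/2)^2 - 1)]
    nlinarith [sq_nonneg (sinh (β/2)), sq_nonneg (sinh γ)]
  have hbound : ∀ t : ℝ, 0 ≤ t → f t = c → β / 4 ≤ t := by
    intro t ht hft
    by_contra h
    push_neg at h
    have h4 : (0:ℝ) ≤ β/4 := by linarith
    have := hmono (Set.mem_Ici.mpr ht) (Set.mem_Ici.mpr h4) h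
    rw [hft] at this
    linarith
  refine ⟨⟨s, ⟨hs0, hfs⟩, ?_⟩, hbound⟩
  intro t ⟨ht, hft⟩
  have hft' : f t = c := hft
  exact hmono.injOn (Set.mem_Ici.mpr ht) (Set.mem_Ici.mpr hs0) (by rw [hft', hfs])
end

section
/- For all real numbers β ≥ γ ≥ 0, the equation sinh(2t)·sinh(t) = sinh(β)·sinh(γ) has a unique solution t in the interval [0,∞); moreover, this solution satisfies t ≥ γ/2. -/
open Real

lemma sinhprod_strictMonoOn : StrictMonoOn (fun t : ℝ => Real.sinh (2 * t) * Real.sinh t) (Set.Ici 0) := by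
  intro a ha b hb hab
  have hb0 : 0 < b := lt_of_le_of_lt ha hab
  exact mul_lt_mul' (Real.sinh_le_sinh.mpr (by linarith)) (Real.sinh_lt_sinh.mpr hab)
    (Real.sinh_nonneg_iff.mpr ha) (Real.sinh_pos_iff.mpr (by linarith))

theorem unique_t_solution (β γ : ℝ) (hβγ : γ ≤ β) (hγ : 0 ≤ γ) :
    (∃! t : ℝ, 0 ≤ t ∧ sinh (2 * t) * sinh t = sinh β * sinh γ) ∧
    ∀ t : ℝ, 0 ≤ t → sinh (2 * t) * sinh t = sinh β * sinh γ →
        γ / 2 ≤ t := by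
  have hβ : 0 ≤ β := le_trans hγ hβγ
  have hcont : ContinuousOn (fun t : ℝ => Real.sinh (2 * t) * Real.sinh t) (Set.Icc 0 β) := by
    fun_prop
  have hC0 : 0 ≤ Real.sinh β * Real.sinh γ :=
    mul_nonneg (Real.sinh_nonneg_iff.mpr hβ) (Real.sinh_nonneg_iff.mpr hγ)
  have hCβ : Real.sinh β * Real.sinh γ ≤ Real.sinh (2 * β) * Real.sinh β := by
    rw [mul_comm (Real.sinh β)]
    exact mul_le_mul (Real.sinh_le_sinh.mpr (by linarith)) le_rfl
      (Real.sinh_nonneg_iff.mpr hβ) (Real.sinh_nonneg_iff.mpr (by linarith))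
  obtain ⟨t, ht, hft⟩ := intermediate_value_Icc hβ hcont
    (Set.mem_Icc.mpr ⟨by simpa using hC0, hCβ⟩)
  have hlast : ∀ t : ℝ, 0 ≤ t → Real.sinh (2 * t) * Real.sinh t = Real.sinh β * Real.sinh γ →
      γ / 2 ≤ t := by
    intro s hs hfs
    by_contra h
    push_neg at h
    have hlt := sinhprod_strictMonoOn hs (Set.mem_Ici.mpr (by linarith)) h
    simp only at hlt
    have : Real.sinh (2 * (γ / 2)) * Real.sinh (γ / 2) ≤ Real.sinh β * Real.sinh γ := by
      rw [show 2 * (γ / 2) = γ by ring, mul_comm]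
      exact mul_le_mul (Real.sinh_le_sinh.mpr (by linarith)) le_rfl
        (Real.sinh_nonneg_iff.mpr hγ) (Real.sinh_nonneg_iff.mpr hβ)
    linarith [hfs ▸ hlt]
  refine ⟨⟨t, ⟨ht.1, hft⟩, ?_⟩, hlast⟩
  rintro s ⟨hs, hfs⟩
  exact sinhprod_strictMonoOn.injOn (Set.mem_Ici.mpr hs) (Set.mem_Ici.mpr ht.1) (hfs.trans hft.symm)
end

section
/- Let s ≥ t ≥ 0 be real numbers. Then the system of equations sinh²(β) + sinh²(γ) = sinh²(2s) + sinh²(s) and sinh(β)·sinh(γ) = sinh(2t)·sinh(t) has a unique solution (β, γ) ∈ ℝ² satisfying β ≥ γ ≥ 0. -/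
open Real

theorem unique_beta_gamma_solution (s t : ℝ) (hts : t ≤ s) (ht : 0 ≤ t) :
    ∃! p : ℝ × ℝ, (p.2 ≤ p.1 ∧ 0 ≤ p.2) ∧
      sinh p.1 ^ 2 + sinh p.2 ^ 2 = sinh (2 * s) ^ 2 + sinh s ^ 2 ∧
      sinh p.1 * sinh p.2 = sinh (2 * t) * sinh t := by
  set A := sinh (2 * s) ^ 2 + sinh s ^ 2 with hA
  set P := sinh (2 * t) * sinh t with hP
  have h2t : sinh (2 * t) ≤ sinh (2 * s) := Real.sinh_le_sinh.mpr (by linarith)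
  have h1t : sinh t ≤ sinh s := Real.sinh_le_sinh.mpr hts
  have ht0 : 0 ≤ sinh t := by rw [← Real.sinh_zero]; exact Real.sinh_le_sinh.mpr ht
  have h2t0 : 0 ≤ sinh (2 * t) := by rw [← Real.sinh_zero]; exact Real.sinh_le_sinh.mpr (by linarith)
  have hP0 : 0 ≤ P := mul_nonneg h2t0 ht0
  have hPs : P ≤ sinh (2 * s) * sinh s := mul_le_mul h2t h1t ht0 (h2t0.trans h2t)
  have hAP : 2 * P ≤ A := by nlinarith [sq_nonneg (sinh (2 * s) - sinh s)]
  have hA0 : 0 ≤ A := by positivity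
  set u := Real.sqrt (A + 2 * P) with hu
  set v := Real.sqrt (A - 2 * P) with hv
  have hu2 : u ^ 2 = A + 2 * P := Real.sq_sqrt (by linarith)
  have hv2 : v ^ 2 = A - 2 * P := Real.sq_sqrt (by linarith)
  have hu0 : 0 ≤ u := Real.sqrt_nonneg _
  have hv0 : 0 ≤ v := Real.sqrt_nonneg _
  have hvu : v ≤ u := Real.sqrt_le_sqrt (by linarith)
  set x := (u + v) / 2 with hx
  set y := (u - v) / 2 with hy
  have hy0 : 0 ≤ y := by rw [hy]; linarith
  have hyx : y ≤ x := by rw [hx, hy]; linarith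
  refine ⟨(Real.arsinh x, Real.arsinh y), ⟨⟨?_, ?_⟩, ?_, ?_⟩, ?_⟩
  · exact Real.arsinh_le_arsinh.mpr hyx
  · simpa using Real.arsinh_le_arsinh.mpr hy0
  · simp only [Real.sinh_arsinh]
    have h : x ^ 2 + y ^ 2 = (u ^ 2 + v ^ 2) / 2 := by ring
    rw [h, hu2, hv2]; ring
  · simp only [Real.sinh_arsinh]
    have h : x * y = (u ^ 2 - v ^ 2) / 4 := by ring
    rw [h, hu2, hv2]; ring
  · rintro ⟨b, g⟩ ⟨⟨hgb, hg0⟩, he1, he2⟩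
    simp only at he1 he2 hgb hg0
    have hyg0 : 0 ≤ sinh g := by rw [← Real.sinh_zero]; exact Real.sinh_le_sinh.mpr hg0
    have hxyg : sinh g ≤ sinh b := Real.sinh_le_sinh.mpr hgb
    have h1 : (sinh b + sinh g) ^ 2 = A + 2 * P := by linear_combination he1 + 2 * he2
    have h2 : (sinh b - sinh g) ^ 2 = A - 2 * P := by linear_combination he1 - 2 * he2
    have hsum : sinh b + sinh g = u := by
      have h := congrArg Real.sqrt h1
      rwa [Real.sqrt_sq (by linarith : (0:ℝ) ≤ sinh b + sinh g), ← hu] at h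
    have hdiff : sinh b - sinh g = v := by
      have h := congrArg Real.sqrt h2
      rwa [Real.sqrt_sq (by linarith : (0:ℝ) ≤ sinh b - sinh g), ← hv] at h
    have hbx : sinh b = x := by rw [hx]; linarith
    have hgy : sinh g = y := by rw [hy]; linarith
    have hb : b = Real.arsinh x := Real.sinh_injective (by rw [Real.sinh_arsinh, hbx])
    have hg : g = Real.arsinh y := Real.sinh_injective (by rw [Real.sinh_arsinh, hgy])
    exact Prod.ext hb hg
end

section
/- Let s, t be real numbers with 1 ≤ t ≤ s ≤ 3t/2, and let (β, γ) with β ≥ γ ≥ 0 be the unique solution of the system sinh²(β) + sinh²(γ) = sinh²(2s) + sinh²(s) and sinh(β)·sinh(γ) = sinh(2t)·sinh(t). Then |β − 2s| ≤ 1 and |γ + 2s − 3t| ≤ 1. -/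
open Real

/-- product-to-sum -/
lemma sinh_mul_sinh' (a b : ℝ) : 2 * (Real.sinh a * Real.sinh b) = Real.cosh (a+b) - Real.cosh (a-b) := by
  rw [Real.cosh_add, Real.cosh_sub]; ring

/-- shifting by one multiplies sinh by at least e -/
lemma sinh_shift (x : ℝ) : Real.exp 1 * Real.sinh x ≤ Real.sinh (x + 1) := by
  have h := Real.cosh_sub_sinh x
  have h2 := Real.exp_pos (-x)
  have h3 : 0 < Real.sinh 1 := Real.sinh_pos_iff.2 one_pos
  rw [Real.sinh_add, ← Real.cosh_add_sinh 1]
  nlinarith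

lemma sinh_one_lb : (1.175 : ℝ) ≤ Real.sinh 1 := by
  have h1 := Real.exp_one_gt_d9
  have h2 := Real.exp_one_lt_d9
  have h3 : Real.exp (-1) = (Real.exp 1)⁻¹ := by rw [Real.exp_neg]
  have h4 : Real.exp (-1) ≤ 0.368 := by
    rw [h3]; rw [inv_le_comm₀] <;> nlinarith
  rw [Real.sinh_eq]
  linarith

lemma cosh_one_bounds : (1.54 : ℝ) ≤ Real.cosh 1 ∧ Real.cosh 1 ≤ 1.544 := by
  have h1 := Real.exp_one_gt_d9
  have h2 := Real.exp_one_lt_d9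
  have h3 : Real.exp (-1) = (Real.exp 1)⁻¹ := by rw [Real.exp_neg]
  have h4 : Real.exp (-1) ≤ 0.368 := by
    rw [h3]; rw [inv_le_comm₀] <;> nlinarith
  have h5 : (0.3678 : ℝ) ≤ Real.exp (-1) := by
    rw [h3]; rw [le_inv_comm₀] <;> nlinarith
  constructor <;> (rw [Real.cosh_eq]; linarith)

lemma exp_sq_ge_two : (2:ℝ) ≤ (Real.exp 1)^2 := by
  nlinarith [Real.exp_one_gt_d9]

lemma exp_three_ge : (20:ℝ) ≤ Real.exp 3 := by
  have h3 : Real.exp 3 = Real.exp 1 * Real.exp 1 * Real.exp 1 := by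
    rw [← Real.exp_add, ← Real.exp_add]; norm_num
  rw [h3]; nlinarith [Real.exp_one_gt_d9]

lemma exp_neg_three_le : Real.exp (-3) ≤ 0.05 := by
  have h := exp_three_ge
  rw [Real.exp_neg]
  have h2 : (0.05:ℝ) = 20⁻¹ := by norm_num
  rw [h2]
  exact inv_anti₀ (by norm_num) h

lemma le_of_sq_le_sq' (a b : ℝ) (hb : 0 ≤ b) (h : a^2 ≤ b^2) : a ≤ b := by
  nlinarith [sq_nonneg (a - b), sq_nonneg (a + b)]

lemma sq_mono' (a b : ℝ) (ha : 0 ≤ a) (h : a ≤ b) : a^2 ≤ b^2 := by nlinarith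

lemma pos_of_prod (a b k : ℝ) (hb : 0 ≤ b) (hba : b ≤ a) (hk : 0 < k) (hm : a * b = k) :
    0 < a ∧ 0 < b := by
  constructor <;> nlinarith

lemma betaUp (b g m a X E : ℝ) (hg : 0 ≤ g) (h1 : b^2 + g^2 = m^2 + a^2)
    (ha : 0 ≤ a) (ham : a ≤ m) (hE : 2 ≤ E^2) (hE0 : 0 ≤ E) (hEX : E * m ≤ X)
    (hX : 0 ≤ X) : b ≤ X := by
  apply le_of_sq_le_sq' _ _ hX
  have hm : 0 ≤ m := le_trans ha ham
  have h4 : (E*m)^2 ≤ X^2 := sq_mono' _ _ (mul_nonneg hE0 hm) hEX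
  nlinarith [sq_nonneg g, sq_nonneg m]

lemma betaLow (b m Y E : ℝ) (h3 : m^2 ≤ 2*b^2) (hY : 0 ≤ Y) (hb : 0 ≤ b)
    (hE : 2 ≤ E^2) (hE0 : 0 ≤ E) (hEY : E * Y ≤ m) : Y ≤ b := by
  apply le_of_sq_le_sq' _ _ hb
  have h4 : (E*Y)^2 ≤ m^2 := sq_mono' _ _ (mul_nonneg hE0 hY) hEY
  nlinarith [sq_nonneg Y]

lemma m_le_2b (b g m a : ℝ) (h1 : b^2 + g^2 = m^2 + a^2) (hgb : g ≤ b) (hg : 0 ≤ g) :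
    m^2 ≤ 2*b^2 := by nlinarith [sq_nonneg a]

lemma b_le_S (b g m a : ℝ) (h1 : b^2 + g^2 = m^2 + a^2) : b^2 ≤ m^2 + a^2 := by
  nlinarith [sq_nonneg g]

lemma gammaUp (b g X m K : ℝ) (hb : 0 < b) (hg : 0 ≤ g) (h2 : b * g = K)
    (hm : m^2 ≤ 2*b^2) (hkey : 2*K^2 ≤ (X*m)^2) (hX : 0 ≤ X) : g ≤ X := by
  apply le_of_sq_le_sq' _ _ hX
  have hK2 : K^2 = b^2 * g^2 := by rw [← h2]; ring
  nlinarith [hK2, mul_le_mul_of_nonneg_left hm (sq_nonneg X), mul_pos hb hb]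

lemma gammaLow (b g S Y K : ℝ) (hb : 0 < b) (hg : 0 ≤ g) (h2 : b * g = K)
    (hS : b^2 ≤ S) (hkey : Y^2 * S ≤ K^2) (hY : 0 ≤ Y) : Y ≤ g := by
  apply le_of_sq_le_sq' _ _ hg
  have hK2 : K^2 = b^2 * g^2 := by rw [← h2]; ring
  nlinarith [hK2, mul_le_mul_of_nonneg_left hS (sq_nonneg Y), mul_pos hb hb]

lemma keyC (K C S X P : ℝ) (hK : 0 < K) (hKub : 2*K ≤ C) (hC2 : C^2 = S^2 + 1)
    (hS : 9 ≤ S) (hP : 1.17 ≤ P) (hge : S * P ≤ X) : 2*K^2 ≤ X^2 := by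
  have hP2 : (1.36:ℝ) ≤ P^2 := by nlinarith
  have hS2 : (81:ℝ) ≤ S^2 := by nlinarith
  have hcore : C^2 ≤ 2*P^2*S^2 := by nlinarith
  have hSP : 0 ≤ S * P := by positivity
  have hsq : (S*P)^2 ≤ X^2 := by nlinarith
  nlinarith [sq_nonneg (S*P)]

lemma keyD (x S C Ct D : ℝ) (hx : 1.17 ≤ x) (hS : S = 4*x^3 + 3*x) (hCu : C ≤ S + 0.05)
    (hCl : S ≤ C) (hCt : Ct ≤ 1 + x) (hCt1 : 1 ≤ Ct) (hD0 : 0 ≤ D)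
    (hDu : D ≤ 0.37*S + 0.08) : (9/8)*D^2 ≤ (C - Ct)^2 := by
  have hx2 : (1.36:ℝ) ≤ x^2 := by nlinarith
  have hx3 : (1.59:ℝ) ≤ x^3 := by
    nlinarith [mul_le_mul_of_nonneg_left hx2 (by linarith : (0:ℝ) ≤ x)]
  have hBD : 1.07*D ≤ C - Ct := by nlinarith
  nlinarith [hBD, hD0]

lemma sinh3_lb (x : ℝ) (hx : 1.17 ≤ x) : (9:ℝ) ≤ 4*x^3 + 3*x := by
  have hx2 : (1.36:ℝ) ≤ x^2 := by nlinarith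
  have hx3 : (1.59:ℝ) ≤ x^3 := by
    nlinarith [mul_le_mul_of_nonneg_left hx2 (by linarith : (0:ℝ) ≤ x)]
  linarith

lemma sumBound (a c m : ℝ) (hm : m = 2*a*c) (hc : 1.54 ≤ c) (ha : 0 ≤ a) :
    m^2 + a^2 ≤ (9/8)*m^2 := by
  subst hm
  have hc2 : (2.37:ℝ) ≤ c^2 := by nlinarith
  nlinarith [sq_nonneg a, mul_le_mul_of_nonneg_left hc2 (sq_nonneg a)]

lemma coshShiftBound (C S c1 s1 D : ℝ) (hD : D = C*c1 - S*s1) (hCu : C ≤ S + 0.05)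
    (hc1l : 1.54 ≤ c1) (hc1u : c1 ≤ 1.544) (hs1 : 1.175 ≤ s1) (hS0 : 0 ≤ S) :
    D ≤ 0.37*S + 0.08 := by nlinarith

lemma cosh_le_one_add_sinh (x : ℝ) (hx : 0 ≤ x) : Real.cosh x ≤ 1 + Real.sinh x := by
  have h1 := Real.cosh_sq x
  have h2 := Real.cosh_pos x
  have h3 : 0 ≤ Real.sinh x := Real.sinh_nonneg_iff.2 hx
  nlinarith

set_option maxHeartbeats 1000000 in
theorem beta_gamma_estimates (s t β γ : ℝ) (ht : 1 ≤ t) (hts : t ≤ s)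
    (hs : s ≤ 3 * t / 2) (hβγ : γ ≤ β) (hγ : 0 ≤ γ)
    (h1 : sinh β ^ 2 + sinh γ ^ 2 = sinh (2 * s) ^ 2 + sinh s ^ 2)
    (h2 : sinh β * sinh γ = sinh (2 * t) * sinh t) :
    |β - 2 * s| ≤ 1 ∧ |γ + 2 * s - 3 * t| ≤ 1 := by
  have hs1 : 1 ≤ s := le_trans ht hts
  have hsγ : 0 ≤ sinh γ := by rw [← Real.sinh_zero]; exact Real.sinh_le_sinh.2 hγ
  have hsβγ : sinh γ ≤ sinh β := Real.sinh_le_sinh.2 hβγ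
  have hP2t : 0 < sinh (2*t) := Real.sinh_pos_iff.2 (by linarith)
  have hPt : 0 < sinh t := Real.sinh_pos_iff.2 (by linarith)
  have hP2s : 0 < sinh (2*s) := Real.sinh_pos_iff.2 (by linarith)
  have hPs : 0 < sinh s := Real.sinh_pos_iff.2 (by linarith)
  have hprodpos := pos_of_prod (sinh β) (sinh γ) (sinh (2*t) * sinh t) hsγ hsβγ
    (mul_pos hP2t hPt) h2
  have hsβ : 0 < sinh β := hprodpos.1
  have hE0 : (0:ℝ) ≤ Real.exp 1 := (Real.exp_pos 1).le
  -- β ≤ 2s + 1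
  have hss2 : sinh s ≤ sinh (2*s) := Real.sinh_le_sinh.2 (by linarith)
  have hup : sinh β ≤ sinh (2*s + 1) := by
    have hL := sinh_shift (2*s)
    have hXpos : 0 < sinh (2*s + 1) := Real.sinh_pos_iff.2 (by linarith)
    exact betaUp (sinh β) (sinh γ) (sinh (2*s)) (sinh s) (sinh (2*s+1)) (Real.exp 1)
      hsγ h1 hPs.le hss2 exp_sq_ge_two hE0 hL hXpos.le
  have hβup : β ≤ 2*s + 1 := Real.sinh_le_sinh.1 hup
  -- β ≥ 2s - 1
  have hm2b : sinh (2*s)^2 ≤ 2 * sinh β ^2 :=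
    m_le_2b (sinh β) (sinh γ) (sinh (2*s)) (sinh s) h1 hsβγ hsγ
  have hlow : sinh (2*s - 1) ≤ sinh β := by
    have hL := sinh_shift (2*s - 1)
    rw [sub_add_cancel] at hL
    have hpos : 0 < sinh (2*s - 1) := Real.sinh_pos_iff.2 (by linarith)
    exact betaLow (sinh β) (sinh (2*s)) (sinh (2*s-1)) (Real.exp 1)
      hm2b hpos.le hsβ.le exp_sq_ge_two hE0 hL
  have hβlow : 2*s - 1 ≤ β := Real.sinh_le_sinh.1 hlow
  -- facts about t
  have hs1b := sinh_one_lb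
  have hc1 := cosh_one_bounds
  have hS3 : sinh (3*t) = 4 * sinh t ^ 3 + 3 * sinh t := Real.sinh_three_mul t
  have hst : (1.17 : ℝ) ≤ sinh t := le_trans (by linarith) (Real.sinh_le_sinh.2 ht)
  have hS3lb : (9 : ℝ) ≤ sinh (3*t) := by rw [hS3]; exact sinh3_lb (sinh t) hst
  have hC3 : cosh (3*t) ^ 2 = sinh (3*t) ^ 2 + 1 := Real.cosh_sq _
  have hC3pos : 0 < cosh (3*t) := Real.cosh_pos _
  have hC3l : sinh (3*t) ≤ cosh (3*t) := by
    have h := Real.cosh_sub_sinh (3*t)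
    linarith [Real.exp_pos (-(3*t))]
  have hC3S : cosh (3*t) ≤ sinh (3*t) + 0.05 := by
    have h := Real.cosh_sub_sinh (3*t)
    have h5 : Real.exp (-(3*t)) ≤ Real.exp (-3) := Real.exp_le_exp.2 (by linarith)
    linarith [exp_neg_three_le]
  have hCt1 : (1:ℝ) ≤ cosh t := Real.one_le_cosh t
  -- K = sinh 2t * sinh t
  have hK : 2 * (sinh (2*t) * sinh t) = cosh (3*t) - cosh t := by
    have h := sinh_mul_sinh' (2*t) t
    have e1 : 2*t + t = 3*t := by ring
    have e2 : 2*t - t = t := by ring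
    rwa [e1, e2] at h
  -- γ ≤ 3t - 2s + 1
  have hkey1 : 2 * (sinh (2*t) * sinh t)^2 ≤ (sinh (3*t - 2*s + 1) * sinh (2*s))^2 := by
    have hprod : 2 * (sinh (3*t - 2*s + 1) * sinh (2*s)) = cosh (3*t+1) - cosh (4*s - 3*t - 1) := by
      have h := sinh_mul_sinh' (3*t - 2*s + 1) (2*s)
      have e1 : 3*t - 2*s + 1 + 2*s = 3*t + 1 := by ring
      have e2 : 3*t - 2*s + 1 - 2*s = -(4*s - 3*t - 1) := by ring
      rw [e1, e2, Real.cosh_neg] at h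
      linarith
    have hmono : cosh (4*s - 3*t - 1) ≤ cosh (3*t - 1) := by
      rw [Real.cosh_le_cosh]
      have habs : |4*s - 3*t - 1| ≤ 3*t - 1 := abs_le.2 ⟨by linarith, by linarith⟩
      exact le_trans habs (le_abs_self _)
    have hprod2 : 2 * (sinh (3*t) * sinh 1) = cosh (3*t+1) - cosh (3*t-1) := by
      have h := sinh_mul_sinh' (3*t) 1
      linarith [h]
    have hge : sinh (3*t) * sinh 1 ≤ sinh (3*t - 2*s + 1) * sinh (2*s) := by linarith
    have hKub : 2 * (sinh (2*t) * sinh t) ≤ cosh (3*t) := by linarith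
    have hKpos : 0 < sinh (2*t) * sinh t := mul_pos hP2t hPt
    exact keyC (sinh (2*t) * sinh t) (cosh (3*t)) (sinh (3*t))
      (sinh (3*t - 2*s + 1) * sinh (2*s)) (sinh 1) hKpos hKub hC3 hS3lb (by linarith) hge
  have hγup : γ ≤ 3*t - 2*s + 1 := by
    have hupos : 0 ≤ sinh (3*t - 2*s + 1) := by
      rw [← Real.sinh_zero]; exact Real.sinh_le_sinh.2 (by linarith)
    have hgs : sinh γ ≤ sinh (3*t - 2*s + 1) :=
      gammaUp (sinh β) (sinh γ) (sinh (3*t - 2*s + 1)) (sinh (2*s)) (sinh (2*t) * sinh t)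
        hsβ hsγ h2 hm2b hkey1 hupos
    exact Real.sinh_le_sinh.1 hgs
  -- γ ≥ 3t - 2s - 1
  have hγlow : 3*t - 2*s - 1 ≤ γ := by
    rcases le_or_gt (3*t - 2*s) 1 with hu | hu
    · linarith
    · have hC3m1ub : cosh (3*t - 1) ≤ 0.37 * sinh (3*t) + 0.08 :=
        coshShiftBound (cosh (3*t)) (sinh (3*t)) (cosh 1) (sinh 1) (cosh (3*t-1))
          (Real.cosh_sub _ _) hC3S hc1.1 hc1.2 hs1b (by linarith)
      have hC3m1pos : (0:ℝ) < cosh (3*t - 1) := Real.cosh_pos _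
      have hCtub : cosh t ≤ 1 + sinh t := cosh_le_one_add_sinh t (by linarith)
      have hprod : 2 * (sinh (3*t - 2*s - 1) * sinh (2*s)) = cosh (3*t-1) - cosh (4*s - 3*t + 1) := by
        have h := sinh_mul_sinh' (3*t - 2*s - 1) (2*s)
        have e1 : 3*t - 2*s - 1 + 2*s = 3*t - 1 := by ring
        have e2 : 3*t - 2*s - 1 - 2*s = -(4*s - 3*t + 1) := by ring
        rw [e1, e2, Real.cosh_neg] at h
        linarith
      have hum1 : 0 ≤ sinh (3*t - 2*s - 1) := by
        rw [← Real.sinh_zero]; exact Real.sinh_le_sinh.2 (by linarith)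
      have hpub : sinh (3*t - 2*s - 1) * sinh (2*s) ≤ cosh (3*t - 1) / 2 := by
        have h := Real.one_le_cosh (4*s - 3*t + 1)
        linarith
      have h2s : sinh (2*s) = 2 * sinh s * cosh s := Real.sinh_two_mul s
      have hcs : cosh 1 ≤ cosh s := by
        rw [Real.cosh_le_cosh, abs_of_nonneg (by linarith : (0:ℝ) ≤ 1),
          abs_of_nonneg (by linarith : (0:ℝ) ≤ s)]
        linarith
      have hSsum : sinh (2*s)^2 + sinh s ^2 ≤ (9/8) * sinh (2*s)^2 :=
        sumBound (sinh s) (cosh s) (sinh (2*s)) h2s (by linarith) hPs.le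
      have hcore : (9/8) * cosh (3*t - 1)^2 ≤ (cosh (3*t) - cosh t)^2 :=
        keyD (sinh t) (sinh (3*t)) (cosh (3*t)) (cosh t) (cosh (3*t-1)) hst hS3
          (by linarith) hC3l (by linarith) hCt1 hC3m1pos.le (by linarith)
      have e2 : (sinh (3*t-2*s-1) * sinh (2*s))^2 ≤ (cosh (3*t-1)/2)^2 :=
        sq_mono' _ _ (mul_nonneg hum1 hP2s.le) hpub
      have e1 : sinh (3*t-2*s-1)^2 * (sinh (2*s)^2 + sinh s ^2) ≤
          sinh (3*t-2*s-1)^2 * ((9/8) * sinh (2*s)^2) :=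
        mul_le_mul_of_nonneg_left hSsum (sq_nonneg _)
      have e3 : (cosh (3*t) - cosh t)^2 = 4 * (sinh (2*t) * sinh t)^2 := by
        rw [← hK]; ring
      have hkey2 : sinh (3*t-2*s-1)^2 * (sinh (2*s)^2 + sinh s ^2) ≤ (sinh (2*t) * sinh t)^2 := by
        linarith [e1, e2, e3, hcore]
      have hbS : sinh β ^2 ≤ sinh (2*s)^2 + sinh s^2 :=
        b_le_S (sinh β) (sinh γ) (sinh (2*s)) (sinh s) h1
      have hgl : sinh (3*t-2*s-1) ≤ sinh γ :=
        gammaLow (sinh β) (sinh γ) (sinh (2*s)^2 + sinh s^2) (sinh (3*t-2*s-1))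
          (sinh (2*t) * sinh t) hsβ hsγ h2 hbS hkey2 hum1
      exact Real.sinh_le_sinh.1 hgl
  constructor <;> (rw [abs_le]; constructor <;> linarith)
end

section
/- For every integer n ≥ 1 and all x, y ∈ [−1/2, 1/2], the n-th Legendre polynomial satisfies |P_n(x) − P_n(y)| ≤ |P_n(x)| + |P_n(y)| ≤ 4/√n. -/
open Polynomial Finset


/-- The `n`-th Legendre polynomial, via Rodrigues' formula
`P_n(x) = (1/(2ⁿ·n!)) · dⁿ/dxⁿ[(x² − 1)ⁿ]`. -/
noncomputable def legendre (n : ℕ) (x : ℝ) : ℝ :=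
  (1 / ((2 : ℝ) ^ n * n.factorial)) * iteratedDeriv n (fun y : ℝ => (y ^ 2 - 1) ^ n) x


lemma iteratedDeriv_polyEval (k : ℕ) (q : ℝ[X]) (x : ℝ) :
    iteratedDeriv k (fun y => q.eval y) x = (derivative^[k] q).eval x := by
  induction k generalizing q x with
  | zero => simp
  | succ k ih =>
    rw [iteratedDeriv_succ', Function.iterate_succ_apply]
    have : deriv (fun y => q.eval y) = fun y => (derivative q).eval y := by
      funext y; exact Polynomial.deriv (p := q) (x := y)
    rw [this, ih]

lemma legendre_eq_eval (n : ℕ) (x : ℝ) :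
    legendre n x = (1 / ((2:ℝ)^n * n.factorial)) *
      (derivative^[n] (((X:ℝ[X])^2 - 1)^n)).eval x := by
  rw [legendre]
  congr 1
  have : (fun y : ℝ => (y^2-1)^n) = fun y => Polynomial.eval y (((X:ℝ[X])^2-1)^n) := by
    funext y; simp
  rw [this, iteratedDeriv_polyEval]

lemma coeff_sq_sub_one_pow_even (n j : ℕ) :
    ((((X:ℝ[X])^2 - 1)^n)).coeff (2*j) =
      if j ≤ n then ((-1:ℝ)^(j + n) * n.choose j) else 0 := by
  rw [sub_pow]
  rw [finset_sum_coeff]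
  have : ∀ m ∈ range (n+1),
      ((-1:ℝ[X])^(m+n) * ((X:ℝ[X])^2)^m * 1^(n-m) * (n.choose m : ℝ[X])).coeff (2*j)
        = if m = j then ((-1:ℝ)^(j+n) * n.choose j) else 0 := by
    intro m hm
    have : ((-1:ℝ[X])^(m+n) * ((X:ℝ[X])^2)^m * 1^(n-m) * (n.choose m : ℝ[X]))
        = C ((-1:ℝ)^(m+n) * n.choose m) * X^(2*m) := by
      push_cast
      simp only [map_mul, map_pow, map_neg, map_one, map_natCast, pow_mul, one_pow, mul_one]
      ring
    rw [this, coeff_C_mul, coeff_X_pow]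
    by_cases h : m = j <;> simp [h]
    omega
  rw [Finset.sum_congr rfl this, Finset.sum_ite_eq' (range (n+1)) j]
  simp [Nat.lt_succ_iff]

lemma coeff_sq_sub_one_pow_odd (n j : ℕ) :
    ((((X:ℝ[X])^2 - 1)^n)).coeff (2*j+1) = 0 := by
  rw [sub_pow, finset_sum_coeff]
  apply Finset.sum_eq_zero
  intro m hm
  have : ((-1:ℝ[X])^(m+n) * ((X:ℝ[X])^2)^m * 1^(n-m) * (n.choose m : ℝ[X]))
      = C ((-1:ℝ)^(m+n) * n.choose m) * X^(2*m) := by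
    push_cast
    simp only [map_mul, map_pow, map_neg, map_one, map_natCast, pow_mul, one_pow, mul_one]
    ring
  rw [this, coeff_C_mul, coeff_X_pow]
  have : ¬ (2*j+1 = 2*m) := by omega
  simp [this]


lemma hderiv2 : derivative ((X:ℝ[X])^2 - 1) = C 2 * X := by
  simp only [derivative_sub, derivative_one, derivative_X_pow, sub_zero]
  norm_num

lemma legP_base (n : ℕ) :
    ((X:ℝ[X])^2 - 1) * derivative (((X:ℝ[X])^2-1)^n) = C (2*(n:ℝ)) * X * ((X:ℝ[X])^2-1)^n := by
  cases n with
  | zero => simp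
  | succ n =>
    rw [derivative_pow, hderiv2, Nat.add_sub_cancel, pow_succ]
    push_cast
    simp only [map_add, map_mul, map_one, map_ofNat]
    ring

lemma legP_step (n : ℕ) : ∀ k, k ≤ n →
    ((X:ℝ[X])^2 - 1) * derivative (derivative^[k] (((X:ℝ[X])^2-1)^n)) =
      C (2*((n:ℝ)-k)) * X * derivative^[k] (((X:ℝ[X])^2-1)^n) +
      C ((k:ℝ)*(2*n+1-k)) * derivative^[k-1] (((X:ℝ[X])^2-1)^n) := by
  intro k
  induction k with
  | zero =>
    intro _
    simpa using legP_base n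
  | succ k ih =>
    intro hk
    have H := ih (Nat.le_of_succ_le hk)
    rcases Nat.eq_zero_or_pos k with rfl | hpos
    · simp only [CharP.cast_eq_zero, zero_mul, map_zero, sub_zero, mul_zero, zero_add,
        Function.iterate_one, Function.iterate_zero, id_eq] at H
      rw [add_zero] at H
      have H2 := congrArg derivative H
      simp only [derivative_add, derivative_mul, derivative_C, hderiv2, derivative_X,
        zero_mul, zero_add, mul_one] at H2
      simp only [Nat.add_sub_cancel, Function.iterate_succ_apply', Function.iterate_zero, id_eq]
      push_cast at H2 ⊢
      simp only [map_sub, map_add, map_mul, map_one, map_ofNat, map_natCast] at H2 ⊢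
      linear_combination H2
    · have hB : derivative (derivative^[k-1] (((X:ℝ[X])^2-1)^n))
          = derivative^[k] (((X:ℝ[X])^2-1)^n) := by
        have h1 : k - 1 + 1 = k := Nat.succ_pred_eq_of_pos hpos
        conv_rhs => rw [← h1, Function.iterate_succ_apply']
      have H2 := congrArg derivative H
      simp only [derivative_add, derivative_mul, derivative_C, hderiv2, derivative_X,
        zero_mul, zero_add, mul_one, hB] at H2
      simp only [Nat.add_sub_cancel, Function.iterate_succ_apply']
      push_cast at H2 ⊢
      simp only [map_sub, map_add, map_mul, map_one, map_ofNat, map_natCast] at H2 ⊢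
      linear_combination H2

lemma legP_ode (n : ℕ) (hn : 1 ≤ n) :
    ((X:ℝ[X])^2-1) * derivative (derivative (derivative^[n] (((X:ℝ[X])^2-1)^n)))
      + C 2 * X * derivative (derivative^[n] (((X:ℝ[X])^2-1)^n))
      = C ((n:ℝ)*((n:ℝ)+1)) * derivative^[n] (((X:ℝ[X])^2-1)^n) := by
  have H := legP_step n n le_rfl
  rw [show (2*((n:ℝ)-(n:ℝ))) = 0 by ring] at H
  simp only [map_zero, zero_mul, zero_add] at H
  have hB : derivative (derivative^[n-1] (((X:ℝ[X])^2-1)^n))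
      = derivative^[n] (((X:ℝ[X])^2-1)^n) := by
    have h1 : n - 1 + 1 = n := Nat.succ_pred_eq_of_pos hn
    have h2 := Function.iterate_succ_apply' (derivative (R:=ℝ)) (n-1) (((X:ℝ[X])^2-1)^n)
    rw [Nat.succ_eq_add_one, h1] at h2
    exact h2.symm
  have H2 := congrArg derivative H
  simp only [derivative_mul, derivative_C, hderiv2, zero_mul, zero_add, hB] at H2
  rw [show ((n:ℝ)*((n:ℝ)+1)) = (n:ℝ)*(2*(n:ℝ)+1-(n:ℝ)) by ring]
  linear_combination H2

lemma energy_deriv (n : ℕ) (hn : 1 ≤ n) :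
    derivative (C ((n:ℝ)*((n:ℝ)+1)) * (1 - X^2) * (derivative^[n] (((X:ℝ[X])^2-1)^n))^2
        + (1 - X^2)^2 * (derivative (derivative^[n] (((X:ℝ[X])^2-1)^n)))^2)
      = - C ((n:ℝ)*((n:ℝ)+1)) * (C 2 * X) * (derivative^[n] (((X:ℝ[X])^2-1)^n))^2 := by
  have ode := legP_ode n hn
  have h1 : derivative (1 - (X:ℝ[X])^2) = -(C 2 * X) := by
    simp only [derivative_sub, derivative_one, derivative_X_pow, zero_sub]
    norm_num
  simp only [derivative_add, derivative_mul, derivative_C, derivative_pow, h1,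
    zero_mul, zero_add, mul_one, Nat.cast_ofNat, pow_one, Nat.sub_self, pow_zero,
    Nat.add_sub_cancel, map_ofNat]
  simp only [map_ofNat] at ode
  linear_combination (-2*(1-(X:ℝ[X])^2)*(derivative (derivative^[n] (((X:ℝ[X])^2-1)^n)))) * ode

lemma key_binom (m : ℕ) : (Nat.centralBinom m)^2 * (2*m+1) ≤ 16^m := by
  induction m with
  | zero => simp [Nat.centralBinom]
  | succ m ih =>
    have h := Nat.succ_mul_centralBinom_succ m
    have hsq : ((m+1) * Nat.centralBinom (m+1))^2 = (2*(2*m+1)*Nat.centralBinom m)^2 := by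
      rw [h]
    have hkey : (m+1)^2 * ((Nat.centralBinom (m+1))^2 * (2*(m+1)+1))
        ≤ (m+1)^2 * 16^(m+1) := by
      calc (m+1)^2 * ((Nat.centralBinom (m+1))^2 * (2*(m+1)+1))
          = ((m+1) * Nat.centralBinom (m+1))^2 * (2*m+3) := by ring
        _ = (2*(2*m+1)*Nat.centralBinom m)^2 * (2*m+3) := by rw [hsq]
        _ = (4*(2*m+1)*(2*m+3)) * ((Nat.centralBinom m)^2 * (2*m+1)) := by ring
        _ ≤ (4*(2*m+1)*(2*m+3)) * 16^m := by
            exact Nat.mul_le_mul_left _ ih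
        _ ≤ (4*(2*m+2)*(2*m+2)) * 16^m := by
            apply Nat.mul_le_mul_right
            nlinarith
        _ = (m+1)^2 * 16^(m+1) := by ring
    exact Nat.le_of_mul_le_mul_left hkey (by positivity)

lemma pow_two_pow_eq (n : ℕ) : ((2:ℝ)^n)^2 = 4^n := by
  rw [← pow_mul, mul_comm, pow_mul]; norm_num

lemma normVal (n : ℕ) (hn : 1 ≤ n) :
    ((n:ℝ)*((n:ℝ)+1)) * ((1/((2:ℝ)^n * n.factorial)) *
        ((derivative^[n] (((X:ℝ[X])^2-1)^n)).coeff 0))^2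
      + ((1/((2:ℝ)^n * n.factorial)) * ((derivative^[n] (((X:ℝ[X])^2-1)^n)).coeff 1))^2
      ≤ n := by
  have hfac : ((n.factorial : ℝ)) ≠ 0 := by positivity
  have h2n : ((2:ℝ)^n) ≠ 0 := by positivity
  have h4 := pow_two_pow_eq n
  rcases Nat.even_or_odd n with ⟨m, hm⟩ | ⟨m, hm⟩
  · -- even case, n = m + m
    have hc0 : ((derivative^[n] (((X:ℝ[X])^2-1)^n)).coeff 0)
        = (n.factorial : ℝ) * ((-1:ℝ)^(m+n) * (n.choose m : ℝ)) := by
      rw [Polynomial.coeff_iterate_derivative]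
      have e : (((X:ℝ[X])^2-1)^n).coeff (0+n) = (-1:ℝ)^(m+n) * (n.choose m : ℝ) := by
        rw [show 0 + n = 2 * m by omega, coeff_sq_sub_one_pow_even, if_pos (by omega)]
      rw [e, show (0+n).descFactorial n = n.factorial by
        rw [Nat.zero_add, Nat.descFactorial_self], nsmul_eq_mul]
    have hc1 : ((derivative^[n] (((X:ℝ[X])^2-1)^n)).coeff 1) = 0 := by
      rw [Polynomial.coeff_iterate_derivative]
      have e : (((X:ℝ[X])^2-1)^n).coeff (1+n) = 0 := by
        rw [show 1 + n = 2 * m + 1 by omega, coeff_sq_sub_one_pow_odd]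
      rw [e, smul_zero]
    rw [hc0, hc1, mul_zero]
    have hkey : ((n.choose m : ℝ))^2 * ((n:ℝ)+1) ≤ 4^n := by
      have h := key_binom m
      have hcb : Nat.centralBinom m = n.choose m := by
        rw [Nat.centralBinom, two_mul]; rw [hm]
      have h16 : (16:ℕ)^m = 4^n := by
        rw [hm, show m + m = 2 * m by ring, pow_mul]; norm_num
      rw [hcb, h16, show 2 * m + 1 = n + 1 by omega] at h
      exact_mod_cast h
    have hsq : ((-1:ℝ)^(m+n))^2 = 1 := by
      rw [← pow_mul, mul_comm, pow_mul]; norm_num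
    have e2 : (1/((2:ℝ)^n * ↑n.factorial)) * (↑n.factorial * ((-1:ℝ)^(m+n) * (n.choose m : ℝ)))
        = (-1:ℝ)^(m+n) * (n.choose m : ℝ) / 2^n := by
      field_simp
    rw [e2, div_pow, mul_pow, hsq, one_mul, h4]
    calc ((n:ℝ)*((n:ℝ)+1)) * ((n.choose m : ℝ)^2 / 4^n) + 0^2
        = (n:ℝ) * (((n.choose m : ℝ))^2 * ((n:ℝ)+1) / 4^n) := by ring
      _ ≤ (n:ℝ) * 1 := by
          apply mul_le_mul_of_nonneg_left _ (by positivity)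
          rw [div_le_one (by positivity)]
          exact hkey
      _ = n := mul_one _
  · -- odd case, n = 2m+1
    have hc0 : ((derivative^[n] (((X:ℝ[X])^2-1)^n)).coeff 0) = 0 := by
      rw [Polynomial.coeff_iterate_derivative]
      have e : (((X:ℝ[X])^2-1)^n).coeff (0+n) = 0 := by
        rw [show 0 + n = 2 * m + 1 by omega, coeff_sq_sub_one_pow_odd]
      rw [e, smul_zero]
    have hdesc : (1 + n).descFactorial n = (n+1).factorial := by
      have h := Nat.descFactorial_succ (n+1) n
      rw [Nat.descFactorial_self] at h
      simp only [Nat.add_sub_cancel_left, one_mul] at h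
      rw [show 1 + n = n + 1 by omega]
      omega
    have hc1 : ((derivative^[n] (((X:ℝ[X])^2-1)^n)).coeff 1)
        = ((n+1).factorial : ℝ) * ((-1:ℝ)^((m+1)+n) * (n.choose (m+1) : ℝ)) := by
      rw [Polynomial.coeff_iterate_derivative]
      have e : (((X:ℝ[X])^2-1)^n).coeff (1+n)
          = (-1:ℝ)^((m+1)+n) * (n.choose (m+1) : ℝ) := by
        rw [show 1 + n = 2 * (m+1) by omega, coeff_sq_sub_one_pow_even, if_pos (by omega)]
      rw [e, hdesc, nsmul_eq_mul]
    rw [hc0, hc1, mul_zero]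
    have hkeyN : ((n+1) * n.choose (m+1))^2 ≤ n * 4^n := by
      have key := key_binom m
      have hch : (2*m+1) * Nat.centralBinom m = n.choose (m+1) * (m+1) := by
        have h := Nat.add_one_mul_choose_eq (2*m) m
        rw [Nat.centralBinom]
        rw [hm]
        omega
      have hmul : (((n+1) * n.choose (m+1))^2) * (m+1)^2
          ≤ (n * 4^n) * (m+1)^2 := by
        calc (((n+1) * n.choose (m+1))^2) * (m+1)^2
            = ((n+1) * (n.choose (m+1) * (m+1)))^2 := by ring
          _ = ((n+1) * ((2*m+1) * Nat.centralBinom m))^2 := by rw [← hch]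
          _ = (n+1)^2 * (2*m+1) * ((Nat.centralBinom m)^2 * (2*m+1)) := by
              rw [hm]; ring
          _ ≤ (n+1)^2 * (2*m+1) * 16^m := Nat.mul_le_mul_left _ key
          _ = (n * 4^n) * (m+1)^2 := by
              rw [hm, show 2*m+1+1 = 2*(m+1) by ring,
                show (4:ℕ)^(2*m+1) = 4 * 16^m by
                  rw [pow_succ']; congr 1; rw [pow_mul]; norm_num]
              ring
      exact Nat.le_of_mul_le_mul_right hmul (by positivity)
    have hkeyR : (((n:ℝ)+1) * (n.choose (m+1) : ℝ))^2 ≤ (n:ℝ) * 4^n := by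
      exact_mod_cast hkeyN
    have hsq : ((-1:ℝ)^((m+1)+n))^2 = 1 := by
      rw [← pow_mul, mul_comm, pow_mul]; norm_num
    have hfacs : ((n+1).factorial : ℝ) = ((n:ℝ)+1) * (n.factorial : ℝ) := by
      rw [Nat.factorial_succ]; push_cast; ring
    have e2 : (1/((2:ℝ)^n * ↑n.factorial)) *
          (((n+1).factorial : ℝ) * ((-1:ℝ)^((m+1)+n) * (n.choose (m+1) : ℝ)))
        = (-1:ℝ)^((m+1)+n) * (((n:ℝ)+1) * (n.choose (m+1) : ℝ)) / 2^n := by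
      rw [hfacs]; field_simp
    rw [e2, div_pow, mul_pow, hsq, one_mul, h4]
    rw [show ((n:ℝ)*((n:ℝ)+1)) * (0:ℝ)^2 = 0 by ring, zero_add]
    rw [div_le_iff₀ (by positivity)]
    calc (((n:ℝ)+1) * (n.choose (m+1) : ℝ))^2 ≤ (n:ℝ) * 4^n := hkeyR
      _ = (n:ℝ) * 4^n := rfl

noncomputable def EPoly (n : ℕ) : ℝ[X] :=
  C ((n:ℝ)*((n:ℝ)+1)) * (1 - X^2) * (derivative^[n] (((X:ℝ[X])^2-1)^n))^2
    + (1 - X^2)^2 * (derivative (derivative^[n] (((X:ℝ[X])^2-1)^n)))^2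

lemma energy_max (n : ℕ) (hn : 1 ≤ n) (x : ℝ) (hx : x ∈ Set.Icc (-(1/2):ℝ) (1/2)) :
    (EPoly n).eval x ≤ (EPoly n).eval 0 := by
  have hd : ∀ t : ℝ, deriv (fun s => (EPoly n).eval s) t
      = -((n:ℝ)*((n:ℝ)+1)) * (2*t) * ((derivative^[n] (((X:ℝ[X])^2-1)^n)).eval t)^2 := by
    intro t
    rw [(Polynomial.hasDerivAt (EPoly n) t).deriv]
    rw [show derivative (EPoly n)
        = - C ((n:ℝ)*((n:ℝ)+1)) * (C 2 * X) * (derivative^[n] (((X:ℝ[X])^2-1)^n))^2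
        from energy_deriv n hn]
    simp only [eval_mul, eval_neg, eval_C, eval_X, eval_pow, eval_ofNat]
  have hcont : Continuous fun s : ℝ => (EPoly n).eval s := by
    exact Polynomial.continuous _
  have hdiff : ∀ t : ℝ, DifferentiableAt ℝ (fun s => (EPoly n).eval s) t := by
    intro t; exact (Polynomial.hasDerivAt (EPoly n) t).differentiableAt
  obtain ⟨hx1, hx2⟩ := hx
  rcases le_total x 0 with hx0 | hx0
  · have hmono : MonotoneOn (fun s => (EPoly n).eval s) (Set.Icc (-(1/2):ℝ) 0) := by
      apply monotoneOn_of_deriv_nonneg (convex_Icc _ _) hcont.continuousOn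
      · intro t _; exact (hdiff t).differentiableWithinAt
      · intro t ht
        rw [interior_Icc] at ht
        rw [hd t]
        have hN : (0:ℝ) ≤ (n:ℝ)*((n:ℝ)+1) := by positivity
        have hkey : 0 ≤ ((n:ℝ)*((n:ℝ)+1)) * (-(2*t))
            * ((derivative^[n] (((X:ℝ[X])^2-1)^n)).eval t)^2 :=
          mul_nonneg (mul_nonneg hN (by nlinarith [ht.2])) (sq_nonneg _)
        nlinarith [hkey]
    exact hmono ⟨hx1, hx0⟩ ⟨by norm_num, le_refl 0⟩ hx0
  · have hanti : AntitoneOn (fun s => (EPoly n).eval s) (Set.Icc (0:ℝ) (1/2)) := by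
      apply antitoneOn_of_deriv_nonpos (convex_Icc _ _) hcont.continuousOn
      · intro t _; exact (hdiff t).differentiableWithinAt
      · intro t ht
        rw [interior_Icc] at ht
        rw [hd t]
        have hN : (0:ℝ) ≤ (n:ℝ)*((n:ℝ)+1) := by positivity
        have hkey : 0 ≤ ((n:ℝ)*((n:ℝ)+1)) * (2*t)
            * ((derivative^[n] (((X:ℝ[X])^2-1)^n)).eval t)^2 :=
          mul_nonneg (mul_nonneg hN (by nlinarith [ht.1])) (sq_nonneg _)
        nlinarith [hkey]
    exact hanti ⟨le_refl 0, by norm_num⟩ ⟨hx0, hx2⟩ hx0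

set_option maxHeartbeats 2000000 in
lemma legendre_abs_le (n : ℕ) (hn : 1 ≤ n) (z : ℝ)
    (hz : z ∈ Set.Icc (-(1 / 2) : ℝ) (1 / 2)) :
    |legendre n z| ≤ 2 / Real.sqrt n := by
  have hn0 : (0:ℝ) < n := by exact_mod_cast hn
  set P : ℝ[X] := derivative^[n] (((X:ℝ[X])^2-1)^n) with hP
  set c : ℝ := 1/((2:ℝ)^n * n.factorial) with hc
  have hcpos : 0 < c := by rw [hc]; positivity
  have hL : legendre n z = c * P.eval z := legendre_eq_eval n z
  obtain ⟨hz1, hz2⟩ := hz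
  have hz3 : (3:ℝ)/4 ≤ 1 - z^2 := by
    nlinarith [mul_nonneg (by linarith : (0:ℝ) ≤ 1/2 - z) (by linarith : (0:ℝ) ≤ z + 1/2)]
  have hE := energy_max n hn z ⟨hz1, hz2⟩
  have hEz : (EPoly n).eval z
      = ((n:ℝ)*((n:ℝ)+1)) * (1 - z^2) * (P.eval z)^2
        + (1 - z^2)^2 * ((derivative P).eval z)^2 := by
    simp [EPoly, eval_mul, eval_add, eval_sub, eval_pow, eval_one, eval_X, eval_C, hP]
  have hE0 : (EPoly n).eval 0
      = ((n:ℝ)*((n:ℝ)+1)) * (P.coeff 0)^2 + (P.coeff 1)^2 := by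
    have h0 : P.eval 0 = P.coeff 0 := (Polynomial.coeff_zero_eq_eval_zero P).symm
    have h1 : (derivative P).eval 0 = P.coeff 1 := by
      rw [← Polynomial.coeff_zero_eq_eval_zero, Polynomial.coeff_derivative]
      norm_num
    simp [EPoly, eval_mul, eval_add, eval_sub, eval_pow, eval_one, eval_X, eval_C, ← hP, h0, h1]
  have hNV := normVal n hn
  rw [← hc, ← hP] at hNV
  -- combine
  have hmain : ((n:ℝ)*((n:ℝ)+1)) * (1 - z^2) * (c * P.eval z)^2 ≤ n := by
    have hstep : ((n:ℝ)*((n:ℝ)+1)) * (1 - z^2) * (P.eval z)^2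
        ≤ ((n:ℝ)*((n:ℝ)+1)) * (P.coeff 0)^2 + (P.coeff 1)^2 := by
      rw [hEz, hE0] at hE
      nlinarith [sq_nonneg ((derivative P).eval z), sq_nonneg (1 - z^2)]
    calc ((n:ℝ)*((n:ℝ)+1)) * (1 - z^2) * (c * P.eval z)^2
        = c^2 * (((n:ℝ)*((n:ℝ)+1)) * (1 - z^2) * (P.eval z)^2) := by ring
      _ ≤ c^2 * (((n:ℝ)*((n:ℝ)+1)) * (P.coeff 0)^2 + (P.coeff 1)^2) := by
          apply mul_le_mul_of_nonneg_left hstep (by positivity)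
      _ = ((n:ℝ)*((n:ℝ)+1)) * (c * P.coeff 0)^2 + (c * P.coeff 1)^2 := by ring
      _ ≤ n := hNV
  rw [← hL] at hmain
  set L : ℝ := legendre n z with hLdef
  have hsqL : L^2 ≤ 4/n := by
    have hNL : 0 ≤ (n:ℝ)*((n:ℝ)+1)*L^2 := by positivity
    have hstep2 : (3/4) * ((n:ℝ)*((n:ℝ)+1)*L^2) ≤ (n:ℝ)*((n:ℝ)+1)*(1-z^2)*L^2 := by
      nlinarith [hNL, hz3]
    have h2 : ((n:ℝ)+1) * L^2 ≤ 4/3 := by nlinarith [hmain, hstep2, hn0, sq_nonneg L]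
    rw [le_div_iff₀ hn0]
    nlinarith [h2, sq_nonneg L]
  have habs : |L| = Real.sqrt (L^2) := (Real.sqrt_sq_eq_abs L).symm
  rw [habs]
  have h4 : Real.sqrt (4/(n:ℝ)) = 2 / Real.sqrt n := by
    rw [Real.sqrt_div (by norm_num : (0:ℝ) ≤ 4)]
    congr 1
    rw [show (4:ℝ) = 2^2 by norm_num, Real.sqrt_sq (by norm_num : (0:ℝ) ≤ 2)]
  rw [← h4]
  exact Real.sqrt_le_sqrt hsqL

theorem legendre_sup_bound (n : ℕ) (hn : 1 ≤ n) (x y : ℝ)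
    (hx : x ∈ Set.Icc (-(1 / 2) : ℝ) (1 / 2)) (hy : y ∈ Set.Icc (-(1 / 2) : ℝ) (1 / 2)) :
    |legendre n x - legendre n y| ≤ |legendre n x| + |legendre n y| ∧
      |legendre n x| + |legendre n y| ≤ 4 / Real.sqrt n := by
  constructor
  · exact abs_sub _ _
  · have h1 := legendre_abs_le n hn x hx
    have h2 := legendre_abs_le n hn y hy
    have : 2 / Real.sqrt n + 2 / Real.sqrt n = 4 / Real.sqrt n := by ring
    linarith
end

section
/- For every non-negative integer n and all x, y ∈ [−1/2, 1/2], the n-th Legendre polynomial satisfies |P_n(x) − P_n(y)| ≤ 4·√n·|x − y|. -/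
open Polynomial intervalIntegral Real Finset

lemma integral_exp_int (d : ℤ) :
    (∫ θ in (0:ℝ)..(2*π), Complex.exp (d * Complex.I * θ)) = if d = 0 then 2*π else 0 := by
  rcases eq_or_ne d 0 with h | h
  · simp [h]
  · rw [if_neg h, integral_exp_mul_complex (by simp [Complex.I_ne_zero, h])]
    have : Complex.exp (d * Complex.I * (2*π)) = 1 := by
      rw [show (d:ℂ) * Complex.I * (2*π) = d * (2*π*Complex.I) by ring]
      exact Complex.exp_int_mul_two_pi_mul_I d
    simp [this]

lemma coeff_integral (q : Polynomial ℂ) (c : ℂ) (r : ℝ) (k : ℕ) :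
    (∫ θ in (0:ℝ)..(2*π), q.eval (c + r * Complex.exp (θ * Complex.I))
        * Complex.exp (-(k * θ * Complex.I)))
      = 2 * π * r^k * (Polynomial.taylor c q).coeff k := by
  set T := Polynomial.taylor c q with hT
  set N := max (T.natDegree + 1) (k+1) with hN
  have hev : ∀ w : ℂ, q.eval (c + w) = ∑ j ∈ range N, T.coeff j * w^j := by
    intro w
    rw [show c + w = w + c by ring, ← Polynomial.taylor_eval c q w, ← hT]
    exact Polynomial.eval_eq_sum_range' (lt_of_lt_of_le (Nat.lt_succ_self _) (le_max_left _ _)) w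
  have hint : ∀ θ : ℝ, q.eval (c + r * Complex.exp (θ * Complex.I))
        * Complex.exp (-(k * θ * Complex.I))
      = ∑ j ∈ range N, T.coeff j * r^j * Complex.exp ((((j:ℤ) - (k:ℤ) : ℤ):ℂ) * Complex.I * θ) := by
    intro θ
    rw [hev, Finset.sum_mul]
    refine Finset.sum_congr rfl fun j _ => ?_
    have hE : ((r:ℂ) * Complex.exp (θ * Complex.I))^j * Complex.exp (-(k * θ * Complex.I))
        = (r:ℂ)^j * Complex.exp ((((j:ℤ) - (k:ℤ) : ℤ):ℂ) * Complex.I * θ) := by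
      rw [mul_pow, ← Complex.exp_nat_mul, mul_assoc, ← Complex.exp_add]
      congr 1
      push_cast; ring
    rw [mul_assoc, hE, ← mul_assoc]
  rw [intervalIntegral.integral_congr (g := fun θ => ∑ j ∈ range N,
      T.coeff j * r^j * Complex.exp ((((j:ℤ) - (k:ℤ) : ℤ):ℂ) * Complex.I * θ)) (fun θ _ => hint θ)]
  rw [intervalIntegral.integral_finset_sum]
  · have : ∀ j ∈ range N, (∫ θ in (0:ℝ)..(2*π),
        T.coeff j * r^j * Complex.exp ((((j:ℤ) - (k:ℤ) : ℤ):ℂ) * Complex.I * θ))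
        = if j = k then T.coeff k * r^k * (2*π) else 0 := by
      intro j _
      rw [intervalIntegral.integral_const_mul, integral_exp_int]
      rcases eq_or_ne j k with h | h
      · simp [h]
      · rw [if_neg (sub_ne_zero.mpr (by exact_mod_cast h)), if_neg h]; simp
    rw [Finset.sum_congr rfl this, Finset.sum_ite_eq' (range N) k]
    rw [if_pos (Finset.mem_range.mpr (lt_of_lt_of_le (Nat.lt_succ_self _) (le_max_right _ _)))]
    push_cast; ring
  · intro j _
    apply Continuous.intervalIntegrable
    continuity

lemma eval_norm (x s θ : ℝ) (hxs : x^2 + s^2 = 1) (hs : 0 ≤ s) :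
    ‖((x:ℂ) + s * Complex.exp (θ * Complex.I))^2 - 1‖
      = 2 * s * Real.sqrt (x^2 + s^2 * Real.sin θ^2) := by
  have hcs : (Complex.cos θ)^2 + (Complex.sin θ)^2 = 1 := Complex.cos_sq_add_sin_sq θ
  have hxs' : (x:ℂ)^2 + (s:ℂ)^2 = 1 := by exact_mod_cast congrArg (Complex.ofReal) hxs
  have key : ((x:ℂ) + s * Complex.exp (θ * Complex.I))^2 - 1
      = Complex.exp (θ * Complex.I) * ((s:ℂ) * ((2*x) + (2*s*Real.sin θ) * Complex.I)) := by
    rw [Complex.exp_mul_I]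
    push_cast
    linear_combination hxs' + (s:ℂ)^2 * hcs + (-(s:ℂ)^2*Complex.sin θ^2) * Complex.I_sq
  rw [key, norm_mul, Complex.norm_exp_ofReal_mul_I, one_mul, norm_mul,
    show ((2:ℂ)*x + (2*s*Real.sin θ) * Complex.I) = ((2*x : ℝ) : ℂ) + ((2*s*Real.sin θ : ℝ):ℂ) * Complex.I by push_cast; ring,
    Complex.norm_real, Real.norm_eq_abs, Complex.norm_add_mul_I,
    abs_of_nonneg hs,
    show (2*x)^2 + (2*s*Real.sin θ)^2 = 2^2*(x^2 + s^2*Real.sin θ^2) by ring,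
    Real.sqrt_mul (by positivity), Real.sqrt_sq (by norm_num)]
  ring

lemma wallis_le (k : ℕ) : (∏ i ∈ range k, (2*(i:ℝ)+1)/(2*i+2)) ≤ 1 / Real.sqrt (k+1) := by
  induction k with
  | zero => simp
  | succ k ih =>
    rw [prod_range_succ]
    have h1 : (0:ℝ) < 2*k+2 := by positivity
    have hW : (0:ℝ) ≤ ∏ i ∈ range k, (2*(i:ℝ)+1)/(2*i+2) :=
      Finset.prod_nonneg fun i _ => by positivity
    have step : (2*(k:ℝ)+1)/(2*k+2) * (1 / Real.sqrt (k+1)) ≤ 1 / Real.sqrt (k+1+1) := by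
      rw [div_mul_div_comm, mul_one, div_le_div_iff₀ (by positivity) (by positivity)]
      have h2 : Real.sqrt ((2*(k:ℝ)+1)^2 * (k+1+1)) ≤ Real.sqrt ((2*(k:ℝ)+2)^2 * (k+1)) := by
        apply Real.sqrt_le_sqrt; nlinarith [sq_nonneg (k:ℝ)]
      rw [Real.sqrt_mul (by positivity), Real.sqrt_mul (by positivity),
        Real.sqrt_sq (by positivity), Real.sqrt_sq (by positivity)] at h2
      calc (2*(k:ℝ)+1) * Real.sqrt (k+1+1) ≤ (2*k+2) * Real.sqrt (k+1) := h2
        _ = 1 * ((2*k+2) * Real.sqrt (k+1)) := by ring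
      
    calc (∏ i ∈ range k, (2*(i:ℝ)+1)/(2*i+2)) * ((2*k+1)/(2*k+2))
        ≤ (1/Real.sqrt (k+1)) * ((2*k+1)/(2*k+2)) := by
          apply mul_le_mul_of_nonneg_right ih (by positivity)
      _ = (2*(k:ℝ)+1)/(2*k+2) * (1 / Real.sqrt (k+1)) := by ring
      _ ≤ 1 / Real.sqrt (k+1+1) := step
      _ = 1 / Real.sqrt ((k+1:ℕ)+1) := by push_cast; ring_nf

lemma integral_sin_pow_two_pi (k : ℕ) :
    (∫ θ in (0:ℝ)..(2*π), Real.sin θ ^ (2*k)) = 2*π * ∏ i ∈ range k, (2*(i:ℝ)+1)/(2*i+2) := by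
  have h1 : (∫ θ in (0:ℝ)..π, Real.sin θ ^ (2*k)) = π * ∏ i ∈ range k, (2*(i:ℝ)+1)/(2*i+2) :=
    integral_sin_pow_even k
  have h2 : (∫ θ in π..(2*π), Real.sin θ ^ (2*k)) = ∫ θ in (0:ℝ)..π, Real.sin θ ^ (2*k) := by
    have := intervalIntegral.integral_comp_add_right (a := (0:ℝ)) (b := π)
      (fun θ => Real.sin θ ^ (2*k)) π
    rw [zero_add, show π + π = 2*π by ring] at this
    rw [← this]
    apply intervalIntegral.integral_congr
    intro θ _
    simp [Real.sin_add_pi, Even.neg_pow (even_two_mul k)]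
  rw [← intervalIntegral.integral_add_adjacent_intervals (a := (0:ℝ)) (b := π) (c := 2*π)
    (Continuous.intervalIntegrable (by continuity) ..) (Continuous.intervalIntegrable (by continuity) ..),
    h1, h2, h1]
  ring

lemma moment_bound (x s : ℝ) (hxs : x^2 + s^2 = 1) (hs : 0 < s) (m : ℕ) :
    (∫ θ in (0:ℝ)..(2*π), (x^2 + s^2 * Real.sin θ^2)^m)
      ≤ 2*π / (s * Real.sqrt (m+1)) := by
  set p : ℕ → ℝ := fun k => (m.choose k : ℝ) * (s^2)^k * (x^2)^(m-k) with hp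
  have hp0 : ∀ k, 0 ≤ p k := fun k => by positivity
  have hsum1 : ∑ k ∈ range (m+1), p k = 1 := by
    have : ∑ k ∈ range (m+1), p k = (s^2 + x^2)^m := by
      rw [add_pow]
      exact Finset.sum_congr rfl fun k _ => by rw [hp]; ring
    rw [this, show s^2 + x^2 = 1 by linarith, one_pow]
  have hexp : ∀ θ : ℝ, (x^2 + s^2 * Real.sin θ^2)^m
      = ∑ k ∈ range (m+1), p k * Real.sin θ^(2*k) := by
    intro θ
    rw [add_comm, add_pow]
    refine Finset.sum_congr rfl fun k _ => ?_
    rw [hp, mul_pow, ← pow_mul]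
    ring
  have hI : (∫ θ in (0:ℝ)..(2*π), (x^2 + s^2 * Real.sin θ^2)^m)
      = 2*π * ∑ k ∈ range (m+1), p k * ∏ i ∈ range k, (2*(i:ℝ)+1)/(2*i+2) := by
    rw [intervalIntegral.integral_congr (g := fun θ => ∑ k ∈ range (m+1), p k * Real.sin θ^(2*k))
         (fun θ _ => hexp θ),
      intervalIntegral.integral_finset_sum (fun k _ => (Continuous.intervalIntegrable (by continuity) ..))]
    rw [Finset.mul_sum]
    refine Finset.sum_congr rfl fun k _ => ?_
    rw [intervalIntegral.integral_const_mul, integral_sin_pow_two_pi]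
    ring
  rw [hI]
  have h1 : ∑ k ∈ range (m+1), p k * ∏ i ∈ range k, (2*(i:ℝ)+1)/(2*i+2)
      ≤ ∑ k ∈ range (m+1), p k * (1 / Real.sqrt (k+1)) :=
    Finset.sum_le_sum fun k _ => mul_le_mul_of_nonneg_left (wallis_le k) (hp0 k)
  have hsum2 : ∑ k ∈ range (m+1), p k / ((k:ℝ)+1) ≤ 1 / (((m:ℝ)+1) * s^2) := by
    have key : ∀ k ∈ range (m+1), p k / ((k:ℝ)+1)
        = ((m+1).choose (k+1) : ℝ) * (s^2)^(k+1) * (x^2)^(m-k) / (((m:ℝ)+1) * s^2) := by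
      intro k hk
      have hc : ((m:ℝ)+1) * (m.choose k : ℝ) = ((m+1).choose (k+1) : ℝ) * ((k:ℝ)+1) := by
        exact_mod_cast congrArg (Nat.cast : ℕ → ℝ) (Nat.add_one_mul_choose_eq m k)
      rw [hp, div_eq_div_iff (by positivity) (by positivity)]
      linear_combination (s^2)^k * s^2 * (x^2)^(m-k) * hc
    rw [Finset.sum_congr rfl key, ← Finset.sum_div]
    have hb : ∑ k ∈ range (m+1), ((m+1).choose (k+1):ℝ)*(s^2)^(k+1)*(x^2)^(m-k) ≤ 1 := by
      have hfull : ∑ j ∈ range (m+2), (s^2)^j * (x^2)^(m+1-j) * ((m+1).choose j : ℝ) = 1 := by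
        rw [← add_pow, show s^2+x^2 = 1 by linarith, one_pow]
      rw [Finset.sum_range_succ'] at hfull
      have heq : ∑ k ∈ range (m+1), ((m+1).choose (k+1):ℝ)*(s^2)^(k+1)*(x^2)^(m-k)
          = ∑ k ∈ range (m+1), (s^2)^(k+1) * (x^2)^(m+1-(k+1)) * ((m+1).choose (k+1):ℝ) := by
        refine Finset.sum_congr rfl fun k hk => ?_
        rw [show m+1-(k+1) = m-k by omega]; ring
      rw [heq]
      simp only [pow_zero, Nat.choose_zero_right, Nat.cast_one, one_mul, mul_one,
        Nat.sub_zero, Nat.add_sub_cancel] at hfull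
      nlinarith [pow_nonneg (sq_nonneg x) (m+1)]
    gcongr
  have hCS : (∑ k ∈ range (m+1), p k * (1/Real.sqrt ((k:ℝ)+1)))^2
      ≤ ∑ k ∈ range (m+1), p k / ((k:ℝ)+1) := by
    have step1 : ∀ k ∈ range (m+1), p k * (1/Real.sqrt ((k:ℝ)+1))
        = Real.sqrt (p k) * Real.sqrt (p k / ((k:ℝ)+1)) := by
      intro k _
      rw [← Real.sqrt_mul (hp0 k), show p k * (p k/((k:ℝ)+1)) = (p k)^2 * (1/((k:ℝ)+1)) by ring,
        Real.sqrt_mul (sq_nonneg _), Real.sqrt_sq (hp0 k), one_div, one_div, Real.sqrt_inv]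
    rw [Finset.sum_congr rfl step1]
    calc (∑ k ∈ range (m+1), Real.sqrt (p k) * Real.sqrt (p k / ((k:ℝ)+1)))^2
        ≤ (∑ k ∈ range (m+1), Real.sqrt (p k)^2) * ∑ k ∈ range (m+1), Real.sqrt (p k / ((k:ℝ)+1))^2 :=
          Finset.sum_mul_sq_le_sq_mul_sq _ _ _
      _ = ∑ k ∈ range (m+1), p k / ((k:ℝ)+1) := by
          rw [Finset.sum_congr rfl (fun k _ => Real.sq_sqrt (hp0 k)),
            Finset.sum_congr rfl (fun k _ => Real.sq_sqrt (div_nonneg (hp0 k) (by positivity))),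
            hsum1, one_mul]
  have hfin : ∑ k ∈ range (m+1), p k * (1/Real.sqrt ((k:ℝ)+1)) ≤ 1 / (s * Real.sqrt ((m:ℝ)+1)) := by
    have ha : 0 ≤ ∑ k ∈ range (m+1), p k * (1/Real.sqrt ((k:ℝ)+1)) :=
      Finset.sum_nonneg fun k _ => mul_nonneg (hp0 k) (by positivity)
    have h2 : (∑ k ∈ range (m+1), p k * (1/Real.sqrt ((k:ℝ)+1)))^2 ≤ 1 / (((m:ℝ)+1) * s^2) :=
      hCS.trans hsum2
    have h3 := Real.sqrt_le_sqrt h2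
    rw [Real.sqrt_sq ha, one_div, Real.sqrt_inv, Real.sqrt_mul (by positivity),
      Real.sqrt_sq hs.le] at h3
    rw [one_div, mul_comm]
    exact h3
  calc 2*π * ∑ k ∈ range (m+1), p k * ∏ i ∈ range k, (2*(i:ℝ)+1)/(2*i+2)
      ≤ 2*π * ∑ k ∈ range (m+1), p k * (1/Real.sqrt ((k:ℝ)+1)) := by
        apply mul_le_mul_of_nonneg_left h1 (by positivity)
    _ ≤ 2*π * (1 / (s * Real.sqrt ((m:ℝ)+1))) := by
        apply mul_le_mul_of_nonneg_left hfin (by positivity)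
    _ = 2*π / (s * Real.sqrt ((m:ℝ)+1)) := by ring

lemma half_pow_bound (x s : ℝ) (hxs : x^2 + s^2 = 1) (hs : 0 < s) (n : ℕ) :
    (∫ θ in (0:ℝ)..(2*π), (Real.sqrt (x^2 + s^2 * Real.sin θ^2))^n)
      ≤ 2*π / (s * Real.sqrt ((n/2 : ℕ)+1)) := by
  set a := n/2 with ha
  set b := n - a with hb
  have hab : a + b = n := by omega
  have hA : ∀ θ : ℝ, (0:ℝ) ≤ x^2 + s^2 * Real.sin θ^2 := fun θ => by positivity
  have hpt : ∀ θ : ℝ, (Real.sqrt (x^2 + s^2 * Real.sin θ^2))^n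
      ≤ ((x^2 + s^2 * Real.sin θ^2)^a + (x^2 + s^2 * Real.sin θ^2)^b)/2 := by
    intro θ
    set A := x^2 + s^2 * Real.sin θ^2
    have h1 : (Real.sqrt A)^n = Real.sqrt (A^n) := by
      rw [show A ^ n = ((Real.sqrt A)^n)^2 by
        rw [← pow_mul, mul_comm, pow_mul, Real.sq_sqrt (hA θ)],
        Real.sqrt_sq (by positivity)]
    rw [h1, ← hab, pow_add]
    have h2 : A^a * A^b ≤ ((A^a + A^b)/2)^2 := by nlinarith [sq_nonneg (A^a - A^b), hA θ]
    calc Real.sqrt (A^a * A^b) ≤ Real.sqrt (((A^a + A^b)/2)^2) := Real.sqrt_le_sqrt h2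
      _ = (A^a + A^b)/2 := Real.sqrt_sq (by positivity)
  have hint : (∫ θ in (0:ℝ)..(2*π), (Real.sqrt (x^2 + s^2 * Real.sin θ^2))^n)
      ≤ ∫ θ in (0:ℝ)..(2*π), ((x^2 + s^2 * Real.sin θ^2)^a + (x^2 + s^2 * Real.sin θ^2)^b)/2 := by
    apply intervalIntegral.integral_mono_on (by positivity)
      (Continuous.intervalIntegrable (by continuity) ..)
      (Continuous.intervalIntegrable (by continuity) ..)
    exact fun θ _ => hpt θ
  have hsplit : (∫ θ in (0:ℝ)..(2*π), ((x^2 + s^2 * Real.sin θ^2)^a + (x^2 + s^2 * Real.sin θ^2)^b)/2)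
      = ((∫ θ in (0:ℝ)..(2*π), (x^2 + s^2 * Real.sin θ^2)^a)
        + ∫ θ in (0:ℝ)..(2*π), (x^2 + s^2 * Real.sin θ^2)^b)/2 := by
    rw [intervalIntegral.integral_div, intervalIntegral.integral_add
      (Continuous.intervalIntegrable (by continuity) ..)
      (Continuous.intervalIntegrable (by continuity) ..)]
  have hmb : (∫ θ in (0:ℝ)..(2*π), (x^2 + s^2 * Real.sin θ^2)^b) ≤ 2*π / (s * Real.sqrt (a+1)) := by
    refine (moment_bound x s hxs hs b).trans ?_
    gcongr
    omega
  calc (∫ θ in (0:ℝ)..(2*π), (Real.sqrt (x^2 + s^2 * Real.sin θ^2))^n)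
      ≤ _ := hint
    _ = _ := hsplit
    _ ≤ (2*π / (s * Real.sqrt ((a:ℝ)+1)) + 2*π / (s * Real.sqrt ((a:ℝ)+1)))/2 := by
        have hma := moment_bound x s hxs hs a
        linarith
    _ = 2*π / (s * Real.sqrt ((a:ℝ)+1)) := by ring

lemma iteratedDeriv_eval (p : Polynomial ℝ) (k : ℕ) :
    iteratedDeriv k (fun x : ℝ => p.eval x) = fun x => (Polynomial.derivative^[k] p).eval x := by
  induction k with
  | zero => simp [iteratedDeriv_zero]
  | succ k ih =>
    rw [iteratedDeriv_succ, ih, Function.iterate_succ_apply']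
    funext x
    exact (Polynomial.hasDerivAt _ x).deriv

lemma deriv_poly_bound (n : ℕ) (hn : 1 ≤ n) (x : ℝ) (hx : x ∈ Set.Icc (-(1/2):ℝ) (1/2)) :
    |(Polynomial.derivative^[n+1] ((X^2 - 1 : Polynomial ℝ)^n)).eval x|
      ≤ 2^n * n.factorial * ((8/3) * Real.sqrt n) := by
  obtain ⟨hx1, hx2⟩ := hx
  have hx4 : x^2 ≤ 1/4 := by nlinarith
  set s : ℝ := Real.sqrt (1 - x^2) with hsdef
  have hs2 : s^2 = 1 - x^2 := Real.sq_sqrt (by nlinarith)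
  have hs34 : (3:ℝ)/4 ≤ s^2 := by rw [hs2]; linarith
  have hs : 0 < s := Real.sqrt_pos.mpr (by nlinarith)
  have hxs : x^2 + s^2 = 1 := by rw [hs2]; ring
  set a : ℕ := n/2 with hadef
  have hsa : (0:ℝ) < Real.sqrt ((a:ℝ)+1) := by positivity
  -- complex transfer
  set q : Polynomial ℂ := (X^2 - 1)^n with hq
  have hmap : q = ((X^2 - 1 : Polynomial ℝ)^n).map (algebraMap ℝ ℂ) := by
    simp [hq, Polynomial.map_pow]
  have htrans : (Polynomial.derivative^[n+1] q).eval (x:ℂ)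
      = Complex.ofReal ((Polynomial.derivative^[n+1] ((X^2 - 1 : Polynomial ℝ)^n)).eval x) := by
    rw [hmap, Polynomial.iterate_derivative_map, Polynomial.eval_map]
    simpa using Polynomial.eval₂_at_apply (p := Polynomial.derivative^[n+1] ((X^2 - 1 : Polynomial ℝ)^n)) (algebraMap ℝ ℂ) x
  -- factorial * taylor coeff
  have hfact : (Polynomial.derivative^[n+1] q).eval (x:ℂ)
      = ((n+1).factorial : ℂ) * (Polynomial.taylor (x:ℂ) q).coeff (n+1) := by
    rw [← Polynomial.factorial_smul_hasseDeriv (n+1), Polynomial.taylor_coeff]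
    simp [Polynomial.eval_smul, nsmul_eq_mul]
  -- norm of integrand
  have hnorm : ∀ θ : ℝ, ‖q.eval ((x:ℂ) + s * Complex.exp (θ * Complex.I))
        * Complex.exp (-((n+1:ℕ) * θ * Complex.I))‖
      = (2*s)^n * (Real.sqrt (x^2 + s^2 * Real.sin θ^2))^n := by
    intro θ
    rw [norm_mul, hq, Polynomial.eval_pow]
    have h1 : ((X^2 - 1 : Polynomial ℂ)).eval ((x:ℂ) + s * Complex.exp (θ * Complex.I))
        = ((x:ℂ) + s * Complex.exp (θ * Complex.I))^2 - 1 := by simp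
    rw [h1, norm_pow, eval_norm x s θ hxs hs.le]
    have h2 : ‖Complex.exp (-((n+1:ℕ) * θ * Complex.I))‖ = 1 := by
      rw [show -((n+1:ℕ) * (θ:ℂ) * Complex.I) = ((-(n+1:ℕ)*θ : ℝ) : ℂ) * Complex.I by push_cast; ring]
      exact Complex.norm_exp_ofReal_mul_I _
    rw [h2, mul_one, mul_pow]
  -- coefficient norm bound
  have hcoeff := coeff_integral q (x:ℂ) s (n+1)
  have hnormint : ‖∫ θ in (0:ℝ)..(2*π), q.eval ((x:ℂ) + s * Complex.exp (θ * Complex.I))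
        * Complex.exp (-((n+1:ℕ) * θ * Complex.I))‖
      ≤ (2*s)^n * (2*π / (s * Real.sqrt ((a:ℝ)+1))) := by
    calc ‖∫ θ in (0:ℝ)..(2*π), q.eval ((x:ℂ) + s * Complex.exp (θ * Complex.I))
          * Complex.exp (-((n+1:ℕ) * θ * Complex.I))‖
        ≤ ∫ θ in (0:ℝ)..(2*π), ‖q.eval ((x:ℂ) + s * Complex.exp (θ * Complex.I))
          * Complex.exp (-((n+1:ℕ) * θ * Complex.I))‖ :=
          intervalIntegral.norm_integral_le_integral_norm (by positivity)
      _ = ∫ θ in (0:ℝ)..(2*π), (2*s)^n * (Real.sqrt (x^2 + s^2 * Real.sin θ^2))^n :=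
          intervalIntegral.integral_congr (fun θ _ => hnorm θ)
      _ = (2*s)^n * ∫ θ in (0:ℝ)..(2*π), (Real.sqrt (x^2 + s^2 * Real.sin θ^2))^n :=
          intervalIntegral.integral_const_mul _ _
      _ ≤ (2*s)^n * (2*π / (s * Real.sqrt ((a:ℝ)+1))) := by
          apply mul_le_mul_of_nonneg_left (half_pow_bound x s hxs hs n) (by positivity)
  have hcn : ‖(Polynomial.taylor (x:ℂ) q).coeff (n+1)‖
      ≤ (2*s)^n * (2*π / (s * Real.sqrt ((a:ℝ)+1))) / (2*π*s^(n+1)) := by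
    have h3 : ‖(2 * (π:ℂ) * (s:ℝ)^(n+1) * (Polynomial.taylor (x:ℂ) q).coeff (n+1))‖
        = 2*π*s^(n+1) * ‖(Polynomial.taylor (x:ℂ) q).coeff (n+1)‖ := by
      rw [norm_mul]
      congr 1
      rw [norm_mul]
      simp [Complex.norm_real, Real.pi_nonneg, abs_of_nonneg hs.le, abs_of_nonneg (pow_nonneg hs.le (n+1))]
    rw [hcoeff, h3] at hnormint
    rw [le_div_iff₀ (by positivity), mul_comm]
    exact hnormint
  -- assemble
  have habs : |(Polynomial.derivative^[n+1] ((X^2 - 1 : Polynomial ℝ)^n)).eval x|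
      = ((n+1).factorial : ℝ) * ‖(Polynomial.taylor (x:ℂ) q).coeff (n+1)‖ := by
    rw [← Real.norm_eq_abs, ← Complex.norm_real, ← htrans, hfact, norm_mul]
    simp
  rw [habs]
  have harith : ((n:ℝ)+1) ≤ 2 * Real.sqrt n * Real.sqrt ((a:ℝ)+1) := by
    have h2 : (n:ℝ) ≤ 2*((a:ℝ))+1 := by exact_mod_cast Nat.cast_le.mpr (by omega : n ≤ 2*a+1)
    have hn1 : (1:ℝ) ≤ (n:ℝ) := by exact_mod_cast hn
    have hsq : ((n:ℝ)+1)^2 ≤ (2 * Real.sqrt n * Real.sqrt ((a:ℝ)+1))^2 := by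
      have e1 : (Real.sqrt n)^2 = (n:ℝ) := Real.sq_sqrt (by positivity)
      have e2 : (Real.sqrt ((a:ℝ)+1))^2 = (a:ℝ)+1 := Real.sq_sqrt (by positivity)
      nlinarith
    have hpos : 0 ≤ 2 * Real.sqrt n * Real.sqrt ((a:ℝ)+1) := by positivity
    nlinarith
  have hfin : ((n+1).factorial : ℝ) * ((2*s)^n * (2*π / (s * Real.sqrt ((a:ℝ)+1))) / (2*π*s^(n+1)))
      ≤ 2^n * n.factorial * ((8/3) * Real.sqrt n) := by
    have e1 : ((n+1).factorial : ℝ) = ((n:ℝ)+1) * n.factorial := by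
      rw [Nat.factorial_succ]; push_cast; ring
    have e2 : (2*s)^n * (2*π / (s * Real.sqrt ((a:ℝ)+1))) / (2*π*s^(n+1))
        = 2^n / (s^2 * Real.sqrt ((a:ℝ)+1)) := by
      rw [mul_pow]
      field_simp
      ring
    rw [e1, e2, show ((n:ℝ)+1)*n.factorial * (2^n/(s^2*Real.sqrt ((a:ℝ)+1)))
      = ((n:ℝ)+1)*n.factorial*2^n/(s^2*Real.sqrt ((a:ℝ)+1)) by ring,
      div_le_iff₀ (by positivity)]
    have hnf : (0:ℝ) ≤ n.factorial := by positivity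
    have h8 : (0:ℝ) ≤ Real.sqrt n := Real.sqrt_nonneg _
    calc ((n:ℝ)+1) * n.factorial * 2^n ≤ (2 * Real.sqrt n * Real.sqrt ((a:ℝ)+1)) * n.factorial * 2^n := by
          apply mul_le_mul_of_nonneg_right (mul_le_mul_of_nonneg_right harith hnf) (by positivity)
      _ ≤ 2^n * n.factorial * ((8/3) * Real.sqrt n) * (s^2 * Real.sqrt ((a:ℝ)+1)) := by
          nlinarith [mul_nonneg (mul_nonneg h8 hsa.le) hnf, pow_nonneg (by norm_num : (0:ℝ) ≤ 2) n,
            mul_nonneg (mul_nonneg h8 hsa.le) (mul_nonneg hnf (pow_nonneg (by norm_num : (0:ℝ) ≤ 2) n))]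
  calc ((n+1).factorial : ℝ) * ‖(Polynomial.taylor (x:ℂ) q).coeff (n+1)‖
      ≤ ((n+1).factorial : ℝ) * ((2*s)^n * (2*π / (s * Real.sqrt ((a:ℝ)+1))) / (2*π*s^(n+1))) := by
        apply mul_le_mul_of_nonneg_left hcn (by positivity)
    _ ≤ 2^n * n.factorial * ((8/3) * Real.sqrt n) := hfin

theorem legendre_lipschitz_bound (n : ℕ) (x y : ℝ)
    (hx : x ∈ Set.Icc (-(1 / 2) : ℝ) (1 / 2)) (hy : y ∈ Set.Icc (-(1 / 2) : ℝ) (1 / 2)) :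
    |legendre n x - legendre n y| ≤ 4 * Real.sqrt n * |x - y| := by
  rcases Nat.eq_zero_or_pos n with hn | hn
  · subst hn
    simp [legendre]
  · have hc0 : ((2:ℝ)^n * n.factorial) ≠ 0 := by positivity
    have hfun : legendre n = fun z => (1/((2:ℝ)^n * n.factorial))
        * (Polynomial.derivative^[n] ((X^2-1 : Polynomial ℝ)^n)).eval z := by
      funext z
      unfold legendre
      rw [show (fun y:ℝ => (y^2-1)^n) = (fun y:ℝ => ((X^2-1 : Polynomial ℝ)^n).eval y)
        from funext (fun y => by simp), iteratedDeriv_eval]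
    have key := Convex.norm_image_sub_le_of_norm_hasDerivWithin_le
      (f := legendre n)
      (f' := fun z => (1/((2:ℝ)^n * n.factorial))
        * (Polynomial.derivative^[n+1] ((X^2-1 : Polynomial ℝ)^n)).eval z)
      (s := Set.Icc (-(1/2):ℝ) (1/2)) (C := 4*Real.sqrt n)
      (fun z _ => by
        rw [hfun]
        have h : HasDerivWithinAt (fun z => (1/((2:ℝ)^n * n.factorial))
            * (Polynomial.derivative^[n] ((X^2-1 : Polynomial ℝ)^n)).eval z)
            ((1/((2:ℝ)^n * n.factorial))
              * (Polynomial.derivative (Polynomial.derivative^[n] ((X^2-1 : Polynomial ℝ)^n))).eval z)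
            (Set.Icc (-(1/2):ℝ) (1/2)) z :=
          (((Polynomial.hasDerivAt (Polynomial.derivative^[n] ((X^2-1 : Polynomial ℝ)^n)) z).const_mul
            (1/((2:ℝ)^n * n.factorial)))).hasDerivWithinAt
        simpa [Function.iterate_succ_apply'] using h)
      (fun z hz => by
        rw [Real.norm_eq_abs, abs_mul]
        calc |1/((2:ℝ)^n * n.factorial)| * |(Polynomial.derivative^[n+1] ((X^2-1 : Polynomial ℝ)^n)).eval z|
            ≤ |1/((2:ℝ)^n * n.factorial)| * (2^n * n.factorial * ((8/3) * Real.sqrt n)) :=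
              mul_le_mul_of_nonneg_left (deriv_poly_bound n hn z hz) (abs_nonneg _)
          _ = (8/3) * Real.sqrt n := by
              rw [abs_of_nonneg (by positivity : (0:ℝ) ≤ 1/((2:ℝ)^n * n.factorial))]
              field_simp
          _ ≤ 4 * Real.sqrt n := by
              apply mul_le_mul_of_nonneg_right (by norm_num) (Real.sqrt_nonneg _))
      (convex_Icc _ _) hy hx
    simpa [Real.norm_eq_abs] using key
end

section
/- Let u, u' ∈ U(2). Then there exist θ, θ' ∈ ℝ such that u' = diag(1, e^{iθ})·u·diag(1, e^{iθ'}) if and only if the (1,1)-entries of u and u' coincide. In particular, the double coset space U(1)\U(2)/U(1), where U(1) is embedded in U(2) as {diag(1, e^{iθ}) : θ ∈ ℝ}, is parametrized by the (1,1)-entry, which lies in the closed unit disc of ℂ. -/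
/-- `diag(1, e^{iθ}) ∈ U(2)`. -/
noncomputable def diagU1 (θ : ℝ) : Matrix (Fin 2) (Fin 2) ℂ :=
  Matrix.diagonal ![1, Complex.exp (θ * Complex.I)]

lemma exists_rot {z w : ℂ} (h : ‖z‖ = ‖w‖) :
    ∃ θ : ℝ, w = z * Complex.exp (θ * Complex.I) := by
  rcases eq_or_ne z 0 with hz | hz
  · refine ⟨0, ?_⟩
    have hw : ‖w‖ = 0 := by rw [← h, hz, norm_zero]
    simp [norm_eq_zero.mp hw, hz]
  · refine ⟨Complex.arg (w / z), ?_⟩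
    have h1 : ‖w / z‖ = 1 := by
      rw [norm_div, ← h, div_self (by simpa using hz)]
    have h2 := Complex.norm_mul_exp_arg_mul_I (w / z)
    rw [h1, Complex.ofReal_one, one_mul] at h2
    rw [h2, mul_div_cancel₀ _ hz]

theorem double_cosets_U1_U2_U1 (u u' : Matrix (Fin 2) (Fin 2) ℂ)
    (hu : u ∈ Matrix.unitaryGroup (Fin 2) ℂ) (hu' : u' ∈ Matrix.unitaryGroup (Fin 2) ℂ) :
    ((∃ θ θ' : ℝ, u' = diagU1 θ * u * diagU1 θ') ↔ u' 0 0 = u 0 0) ∧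
      ‖u 0 0‖ ≤ 1 := by
  have H := Matrix.mem_unitaryGroup_iff.mp hu
  have H' := Matrix.mem_unitaryGroup_iff.mp hu'
  have Hc := Matrix.mem_unitaryGroup_iff'.mp hu
  have Hc' := Matrix.mem_unitaryGroup_iff'.mp hu'
  -- row/column equations
  have r00 : u 0 0 * (starRingEnd ℂ) (u 0 0) + u 0 1 * (starRingEnd ℂ) (u 0 1) = 1 := by
    have := congrFun (congrFun H 0) 0
    simpa [Matrix.mul_apply, Fin.sum_univ_two, Matrix.conjTranspose_apply, Matrix.one_apply] using this
  have r01 : u 0 0 * (starRingEnd ℂ) (u 1 0) + u 0 1 * (starRingEnd ℂ) (u 1 1) = 0 := by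
    have := congrFun (congrFun H 0) 1
    simpa [Matrix.mul_apply, Fin.sum_univ_two, Matrix.conjTranspose_apply, Matrix.one_apply] using this
  have c00 : (starRingEnd ℂ) (u 0 0) * u 0 0 + (starRingEnd ℂ) (u 1 0) * u 1 0 = 1 := by
    have := congrFun (congrFun Hc 0) 0
    simpa [Matrix.mul_apply, Fin.sum_univ_two, Matrix.conjTranspose_apply, Matrix.one_apply] using this
  have r00' : u' 0 0 * (starRingEnd ℂ) (u' 0 0) + u' 0 1 * (starRingEnd ℂ) (u' 0 1) = 1 := by
    have := congrFun (congrFun H' 0) 0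
    simpa [Matrix.mul_apply, Fin.sum_univ_two, Matrix.conjTranspose_apply, Matrix.one_apply] using this
  have r01' : u' 0 0 * (starRingEnd ℂ) (u' 1 0) + u' 0 1 * (starRingEnd ℂ) (u' 1 1) = 0 := by
    have := congrFun (congrFun H' 0) 1
    simpa [Matrix.mul_apply, Fin.sum_univ_two, Matrix.conjTranspose_apply, Matrix.one_apply] using this
  have c00' : (starRingEnd ℂ) (u' 0 0) * u' 0 0 + (starRingEnd ℂ) (u' 1 0) * u' 1 0 = 1 := by
    have := congrFun (congrFun Hc' 0) 0
    simpa [Matrix.mul_apply, Fin.sum_univ_two, Matrix.conjTranspose_apply, Matrix.one_apply] using this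
  have habs : ‖u 0 0‖ ≤ 1 := by
    have h1 : Complex.normSq (u 0 0) + Complex.normSq (u 0 1) = 1 := by
      have := r00
      rw [Complex.mul_conj, Complex.mul_conj] at this
      exact_mod_cast this
    have h2 : Complex.normSq (u 0 0) ≤ 1 := by nlinarith [Complex.normSq_nonneg (u 0 1)]
    rw [← Complex.sq_norm] at h2
    nlinarith [norm_nonneg (u 0 0)]
  refine ⟨⟨?_, ?_⟩, habs⟩
  · rintro ⟨θ, θ', rfl⟩
    simp [diagU1, Matrix.mul_diagonal, Matrix.diagonal_mul]
  · intro hA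
    -- abs equalities
    have hb : ‖u 0 1‖ = ‖u' 0 1‖ := by
      have : Complex.normSq (u 0 1) = Complex.normSq (u' 0 1) := by
        have e1 : Complex.normSq (u 0 0) + Complex.normSq (u 0 1) = 1 := by
          have := r00; rw [Complex.mul_conj, Complex.mul_conj] at this; exact_mod_cast this
        have e2 : Complex.normSq (u' 0 0) + Complex.normSq (u' 0 1) = 1 := by
          have := r00'; rw [Complex.mul_conj, Complex.mul_conj] at this; exact_mod_cast this
        rw [hA] at e2; linarith
      rw [Complex.norm_def, Complex.norm_def, this]
    have hc : ‖u 1 0‖ = ‖u' 1 0‖ := by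
      have hns : Complex.normSq (u 1 0) = Complex.normSq (u' 1 0) := by
        have e1 : Complex.normSq (u 0 0) + Complex.normSq (u 1 0) = 1 := by
          have := c00; rw [mul_comm, mul_comm ((starRingEnd ℂ) (u 1 0)), Complex.mul_conj, Complex.mul_conj] at this
          exact_mod_cast this
        have e2 : Complex.normSq (u' 0 0) + Complex.normSq (u' 1 0) = 1 := by
          have := c00'; rw [mul_comm, mul_comm ((starRingEnd ℂ) (u' 1 0)), Complex.mul_conj, Complex.mul_conj] at this
          exact_mod_cast this
        rw [hA] at e2; linarith
      rw [Complex.norm_def, Complex.norm_def, hns]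
    have r11 : u 1 0 * (starRingEnd ℂ) (u 1 0) + u 1 1 * (starRingEnd ℂ) (u 1 1) = 1 := by
      have := congrFun (congrFun H 1) 1
      simpa [Matrix.mul_apply, Fin.sum_univ_two, Matrix.conjTranspose_apply, Matrix.one_apply] using this
    have r11' : u' 1 0 * (starRingEnd ℂ) (u' 1 0) + u' 1 1 * (starRingEnd ℂ) (u' 1 1) = 1 := by
      have := congrFun (congrFun H' 1) 1
      simpa [Matrix.mul_apply, Fin.sum_univ_two, Matrix.conjTranspose_apply, Matrix.one_apply] using this
    rcases eq_or_ne (u 0 1) 0 with hb0 | hb0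
    · -- b = 0 case
      have hb0' : u' 0 1 = 0 := by
        have : ‖u' 0 1‖ = 0 := by rw [← hb, hb0, norm_zero]
        exact norm_eq_zero.mp this
      have hc0 : u 1 0 = 0 := by
        have e1 : u 0 0 * (starRingEnd ℂ) (u 0 0) = 1 := by
          have := r00; rw [hb0] at this; simpa using this
        have h2 : (starRingEnd ℂ) (u 1 0) * u 1 0 = 0 := by
          linear_combination c00 - e1 + mul_comm (u 0 0) ((starRingEnd ℂ) (u 0 0))
        have h3 : Complex.normSq (u 1 0) = 0 := by
          rw [mul_comm, Complex.mul_conj] at h2; exact_mod_cast h2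
        exact Complex.normSq_eq_zero.mp h3
      have hc0' : u' 1 0 = 0 := by
        have : ‖u' 1 0‖ = 0 := by rw [← hc, hc0, norm_zero]
        exact norm_eq_zero.mp this
      have hd : ‖u 1 1‖ = ‖u' 1 1‖ := by
        have e1 : u 1 1 * (starRingEnd ℂ) (u 1 1) = 1 := by
          have := r11; rw [hc0] at this; simpa using this
        have e2 : u' 1 1 * (starRingEnd ℂ) (u' 1 1) = 1 := by
          have := r11'; rw [hc0'] at this; simpa using this
        have n1 : Complex.normSq (u 1 1) = 1 := by
          rw [Complex.mul_conj] at e1; exact_mod_cast e1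
        have n2 : Complex.normSq (u' 1 1) = 1 := by
          rw [Complex.mul_conj] at e2; exact_mod_cast e2
        rw [Complex.norm_def, Complex.norm_def, n1, n2]
      obtain ⟨θ, hθ⟩ := exists_rot hd
      refine ⟨θ, 0, ?_⟩
      ext i j
      fin_cases i <;> fin_cases j <;>
        simp [diagU1, Matrix.mul_diagonal, Matrix.diagonal_mul, hA, hb0, hb0', hc0, hc0'] <;>
        simp [hθ, mul_comm]
    · -- b ≠ 0 case
      obtain ⟨θ', hθ'⟩ := exists_rot hb
      obtain ⟨θ, hθ⟩ := exists_rot hc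
      set e : ℂ := Complex.exp (θ * Complex.I) with hedef
      set e' : ℂ := Complex.exp (θ' * Complex.I) with he'def
      have he : e * (starRingEnd ℂ) e = 1 := by
        rw [Complex.mul_conj]
        norm_cast
        rw [← Complex.sq_norm]
        simp [hedef, Complex.norm_exp_ofReal_mul_I]
      have he' : e' * (starRingEnd ℂ) e' = 1 := by
        rw [Complex.mul_conj]
        norm_cast
        rw [← Complex.sq_norm]
        simp [he'def, Complex.norm_exp_ofReal_mul_I]
      have hene : e ≠ 0 := Complex.exp_ne_zero _
      have he'ne : e' ≠ 0 := Complex.exp_ne_zero _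
      have hr01'sub : u 0 0 * ((starRingEnd ℂ) (u 1 0) * (starRingEnd ℂ) e) +
          (u 0 1 * e') * (starRingEnd ℂ) (u' 1 1) = 0 := by
        have := r01'
        rw [hA, hθ, hθ', map_mul] at this
        linear_combination this
      have hbne' : u 0 1 * e' ≠ 0 := mul_ne_zero hb0 he'ne
      have hstar : u 0 1 * e' * ((starRingEnd ℂ) (u' 1 1)) =
          u 0 1 * e' * ((starRingEnd ℂ) (u 1 1) * (starRingEnd ℂ) e * (starRingEnd ℂ) e') := by
        linear_combination hr01'sub - (starRingEnd ℂ) e * r01 -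
          u 0 1 * (starRingEnd ℂ) (u 1 1) * (starRingEnd ℂ) e * he'
      have hstar2 : (starRingEnd ℂ) (u' 1 1) =
          (starRingEnd ℂ) (u 1 1) * (starRingEnd ℂ) e * (starRingEnd ℂ) e' :=
        mul_left_cancel₀ hbne' hstar
      have hd : u' 1 1 = u 1 1 * e * e' := by
        have := congrArg (starRingEnd ℂ) hstar2
        simpa [map_mul] using this
      refine ⟨θ, θ', ?_⟩
      ext i j
      fin_cases i <;> fin_cases j <;>
        simp only [diagU1, Matrix.mul_diagonal, Matrix.diagonal_mul, Matrix.cons_val_zero,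
          Matrix.cons_val_one, Matrix.head_cons, Fin.isValue, Fin.mk_zero, Fin.mk_one, one_mul, mul_one]
      · exact hA
      · exact hθ'
      · linear_combination hθ
      · linear_combination hd
end

section
/- Let u, u' ∈ SU(2), written as the matrices with rows (a + ib, −c + id), (c + id, a − ib) and (a' + ib', −c' + id'), (c' + id', a' − ib') respectively, where a² + b² + c² + d² = 1 and a'² + b'² + c'² + d'² = 1. Then there exist θ, θ' ∈ ℝ such that u' = R_θ·u·R_{θ'}, where R_θ is the rotation matrix with rows (cos θ, −sin θ) and (sin θ, cos θ), if and only if a'² − b'² + c'² − d'² = a² − b² + c² − d². In other words, the double cosets of SO(2) in SU(2) are labeled by the quantity a² − b² + c² − d². -/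
lemma circle_rot (x y x' y' : ℝ) (h : x' ^ 2 + y' ^ 2 = x ^ 2 + y ^ 2) :
    ∃ φ : ℝ, x' = x * Real.cos φ - y * Real.sin φ ∧ y' = x * Real.sin φ + y * Real.cos φ := by
  by_cases hz : x = 0 ∧ y = 0
  · refine ⟨0, ?_, ?_⟩ <;> obtain ⟨hx, hy⟩ := hz <;> subst hx <;> subst hy <;>
      simp <;> nlinarith [sq_nonneg x', sq_nonneg y']
  · set z : ℂ := ⟨x, y⟩ with hzdef
    set z' : ℂ := ⟨x', y'⟩ with hz'def
    have habs : ‖z'‖ = ‖z‖ := by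
      simp [Complex.norm_def, Complex.normSq_mk, hzdef, hz'def]
      rw [show x' * x' + y' * y' = x * x + y * y by nlinarith]
    set φ : ℝ := z'.arg - z.arg with hφ
    have key : z' = z * Complex.exp ((φ : ℝ) * Complex.I) := by
      have cal : z * Complex.exp ((φ : ℝ) * Complex.I) = z' := by
        calc z * Complex.exp ((φ : ℝ) * Complex.I)
            = (‖z‖ : ℂ) * Complex.exp (z.arg * Complex.I) *
              Complex.exp ((φ : ℝ) * Complex.I) := by
              rw [Complex.norm_mul_exp_arg_mul_I]
          _ = (‖z'‖ : ℂ) * Complex.exp (z'.arg * Complex.I) := by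
              rw [habs, mul_assoc, ← Complex.exp_add, hφ]
              push_cast
              ring_nf
          _ = z' := Complex.norm_mul_exp_arg_mul_I z'
      exact cal.symm
    rw [Complex.exp_mul_I] at key
    simp only [Complex.ext_iff, hzdef, hz'def, Complex.add_re, Complex.add_im, Complex.mul_re,
      Complex.mul_im, Complex.I_re, Complex.I_im, Complex.cos_ofReal_re, Complex.cos_ofReal_im,
      Complex.sin_ofReal_re, Complex.sin_ofReal_im] at key
    obtain ⟨k1, k2⟩ := key
    exact ⟨φ, by linarith, by linarith⟩

/-- The rotation matrix `R_θ`, viewed as a 2×2 complex matrix. -/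
noncomputable def rot (θ : ℝ) : Matrix (Fin 2) (Fin 2) ℂ :=
  !![(Real.cos θ : ℂ), -(Real.sin θ : ℂ); (Real.sin θ : ℂ), (Real.cos θ : ℂ)]

theorem double_cosets_SO2_SU2_SO2 (a b c d a' b' c' d' : ℝ)
    (habcd : a ^ 2 + b ^ 2 + c ^ 2 + d ^ 2 = 1)
    (habcd' : a' ^ 2 + b' ^ 2 + c' ^ 2 + d' ^ 2 = 1)
    (u u' : Matrix (Fin 2) (Fin 2) ℂ)
    (hu : u = !![(a : ℂ) + b * Complex.I, -(c : ℂ) + d * Complex.I;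
        (c : ℂ) + d * Complex.I, (a : ℂ) - b * Complex.I])
    (hu' : u' = !![(a' : ℂ) + b' * Complex.I, -(c' : ℂ) + d' * Complex.I;
        (c' : ℂ) + d' * Complex.I, (a' : ℂ) - b' * Complex.I]) :
    (∃ θ θ' : ℝ, u' = rot θ * u * rot θ') ↔
      a' ^ 2 - b' ^ 2 + c' ^ 2 - d' ^ 2 = a ^ 2 - b ^ 2 + c ^ 2 - d ^ 2 := by
  subst hu hu'
  constructor
  · rintro ⟨θ, θ', h⟩
    have e00 := congrFun (congrFun h 0) 0
    have e10 := congrFun (congrFun h 1) 0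
    simp [rot, Matrix.mul_apply, Fin.sum_univ_two, Complex.ext_iff,
      Complex.cos_ofReal_re, Complex.sin_ofReal_re] at e00 e10
    obtain ⟨ea, eb⟩ := e00
    obtain ⟨ec, ed⟩ := e10
    have hp : Real.sin θ ^ 2 + Real.cos θ ^ 2 = 1 := Real.sin_sq_add_cos_sq θ
    have hp' : Real.sin θ' ^ 2 + Real.cos θ' ^ 2 = 1 := Real.sin_sq_add_cos_sq θ'
    rw [ea, eb, ec, ed]
    linear_combination (a ^ 2 - b ^ 2 + c ^ 2 - d ^ 2) *
        (Real.sin θ' ^ 2 + Real.cos θ' ^ 2) * hp +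
      (a ^ 2 - b ^ 2 + c ^ 2 - d ^ 2) * hp'
  · intro h
    have h1 : a' ^ 2 + c' ^ 2 = a ^ 2 + c ^ 2 := by linarith
    have h2 : b' ^ 2 + d' ^ 2 = b ^ 2 + d ^ 2 := by linarith
    obtain ⟨φ, ha', hc'⟩ := circle_rot a c a' c' h1
    obtain ⟨ψ, hb', hd'⟩ := circle_rot b d b' d' h2
    refine ⟨(φ + ψ) / 2, (φ - ψ) / 2, ?_⟩
    set θ := (φ + ψ) / 2 with hθ
    set θ' := (φ - ψ) / 2 with hθ'
    have hφ : φ = θ + θ' := by rw [hθ, hθ']; ring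
    have hψ : ψ = θ - θ' := by rw [hθ, hθ']; ring
    rw [hφ, Real.cos_add, Real.sin_add] at ha' hc'
    rw [hψ, Real.cos_sub, Real.sin_sub] at hb' hd'
    ext i j
    fin_cases i <;> fin_cases j <;>
      simp [rot, Matrix.mul_apply, Fin.sum_univ_two, Complex.ext_iff,
        Complex.cos_ofReal_re, Complex.sin_ofReal_re] <;>
      constructor <;> linarith [ha', hb', hc', hd']
end

section
/- Let μ be the Haar probability measure on the compact group U(2). Let f, g : U(2) → ℂ be continuous functions that are both bi-invariant under the subgroup U(1) = {diag(1, e^{iθ}) : θ ∈ ℝ}, i.e., f(w₁·u·w₂) = f(u) and g(w₁·u·w₂) = g(u) for all u ∈ U(2) and w₁, w₂ ∈ U(1). Then the convolution product of f and g with respect to μ is commutative: for every u ∈ U(2), ∫ f(v)·g(v⁻¹·u) dμ(v) = ∫ g(v)·f(v⁻¹·u) dμ(v). (This expresses that (U(2), U(1)) is a Gelfand pair.) -/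
open MeasureTheory

noncomputable instance : MeasurableSpace (Matrix.unitaryGroup (Fin 2) ℂ) := borel _

instance : BorelSpace (Matrix.unitaryGroup (Fin 2) ℂ) := ⟨rfl⟩

/-- Members of the copy of `U(1)` inside `U(2)` given by `{diag(1, e^{iθ}) : θ ∈ ℝ}`. -/
def IsU1 (w : Matrix.unitaryGroup (Fin 2) ℂ) : Prop :=
  ∃ θ : ℝ, (w : Matrix (Fin 2) (Fin 2) ℂ) = Matrix.diagonal ![1, Complex.exp (θ * Complex.I)]

namespace GelfandAux

open Matrix

abbrev GU := Matrix.unitaryGroup (Fin 2) ℂ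

instance : SecondCountableTopology (Matrix (Fin 2) (Fin 2) ℂ) :=
  inferInstanceAs (SecondCountableTopology (Fin 2 → Fin 2 → ℂ))

instance : ContinuousInv GU :=
  ⟨continuous_induced_rng.2 (continuous_star.comp continuous_subtype_val)⟩

instance : IsTopologicalGroup GU := {}

/-- membership in the unitary group, unfolded -/
lemma mem_iff' {A : Matrix (Fin 2) (Fin 2) ℂ} :
    A ∈ Matrix.unitaryGroup (Fin 2) ℂ ↔ star A * A = 1 ∧ A * star A = 1 :=
  Unitary.mem_iff

lemma isCompact_unitary : IsCompact (Matrix.unitaryGroup (Fin 2) ℂ : Set (Matrix (Fin 2) (Fin 2) ℂ)) := by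
  have hsub : (Matrix.unitaryGroup (Fin 2) ℂ : Set (Matrix (Fin 2) (Fin 2) ℂ)) ⊆
      Set.pi Set.univ (fun _ : Fin 2 => Set.pi Set.univ
        (fun _ : Fin 2 => Metric.closedBall (0 : ℂ) 1)) := by
    intro A hA
    obtain ⟨h1, h2⟩ := mem_iff'.mp hA
    intro i _ j _
    have e := congrFun (congrFun h2 i) i
    simp only [Matrix.mul_apply, Fin.sum_univ_two, Matrix.conjTranspose_apply,
      Matrix.one_apply_eq] at e
    have e2 : (Complex.normSq (A i 0) : ℂ) + (Complex.normSq (A i 1) : ℂ) = 1 := by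
      rw [← Complex.mul_conj, ← Complex.mul_conj]
      simpa using e
    have e3 : Complex.normSq (A i 0) + Complex.normSq (A i 1) = 1 := by
      exact_mod_cast e2
    have hle : Complex.normSq (A i j) ≤ 1 := by
      have h0 := Complex.normSq_nonneg (A i 0)
      have h1' := Complex.normSq_nonneg (A i 1)
      fin_cases j <;> (beta_reduce; simp only [Fin.mk_zero, Fin.mk_one]) <;> nlinarith
    simp only [Metric.mem_closedBall, dist_zero_right, Complex.norm_def]
    calc Real.sqrt (Complex.normSq (A i j)) ≤ Real.sqrt 1 := Real.sqrt_le_sqrt hle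
      _ = 1 := Real.sqrt_one
  have hclosed : IsClosed (Matrix.unitaryGroup (Fin 2) ℂ : Set (Matrix (Fin 2) (Fin 2) ℂ)) := by
    have : (Matrix.unitaryGroup (Fin 2) ℂ : Set (Matrix (Fin 2) (Fin 2) ℂ)) =
        (fun A : Matrix (Fin 2) (Fin 2) ℂ => star A * A) ⁻¹' {1} ∩
        (fun A : Matrix (Fin 2) (Fin 2) ℂ => A * star A) ⁻¹' {1} := by
      ext A
      simp [mem_iff', Set.mem_preimage]
    rw [this]
    exact ((isClosed_singleton.preimage (continuous_star.mul continuous_id)).inter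
      (isClosed_singleton.preimage (continuous_id.mul continuous_star)))
  exact IsCompact.of_isClosed_subset
    ((isCompact_univ_pi fun _ => isCompact_univ_pi fun _ =>
      isCompact_closedBall (0 : ℂ) 1)) hclosed hsub

instance : CompactSpace GU :=
  isCompact_iff_compactSpace.mp isCompact_unitary

/-- The transpose map on `U(2)`. -/
lemma star_transpose (B : Matrix (Fin 2) (Fin 2) ℂ) : star (Bᵀ) = (star B)ᵀ := by
  ext i j
  simp [Matrix.conjTranspose_apply, Matrix.transpose_apply]

def Tmap (u : GU) : GU :=
  ⟨(u : Matrix (Fin 2) (Fin 2) ℂ)ᵀ, by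
    obtain ⟨h1, h2⟩ := mem_iff'.mp u.2
    refine mem_iff'.mpr ⟨?_, ?_⟩
    · rw [star_transpose, ← Matrix.transpose_mul, h2, Matrix.transpose_one]
    · rw [star_transpose, ← Matrix.transpose_mul, h1, Matrix.transpose_one]⟩

@[simp] lemma Tmap_coe (u : GU) : (Tmap u : Matrix (Fin 2) (Fin 2) ℂ) = (u : Matrix (Fin 2) (Fin 2) ℂ)ᵀ := rfl

lemma Tmap_mul (u v : GU) : Tmap (u * v) = Tmap v * Tmap u :=
  Subtype.ext (Matrix.transpose_mul _ _)

@[simp] lemma Tmap_Tmap (u : GU) : Tmap (Tmap u) = u :=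
  Subtype.ext (Matrix.transpose_transpose _)

lemma Tmap_one : Tmap 1 = 1 := Subtype.ext Matrix.transpose_one

lemma Tmap_inv (u : GU) : Tmap u⁻¹ = (Tmap u)⁻¹ := by
  apply eq_inv_of_mul_eq_one_right
  rw [← Tmap_mul, inv_mul_cancel, Tmap_one]

lemma continuous_Tmap : Continuous Tmap :=
  continuous_induced_rng.2 (continuous_subtype_val.matrix_transpose)

/-- The transpose homeomorphism. -/
def Thomeo : GU ≃ₜ GU where
  toFun := Tmap
  invFun := Tmap
  left_inv := Tmap_Tmap
  right_inv := Tmap_Tmap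
  continuous_toFun := continuous_Tmap
  continuous_invFun := continuous_Tmap

lemma isU1_one : IsU1 1 := by
  refine ⟨0, ?_⟩
  ext i j
  fin_cases i <;> fin_cases j <;>
    simp [Matrix.one_apply, Matrix.diagonal]

lemma isU1_diag {α : ℂ} (hα : ‖α‖ = 1)
    (h : Matrix.diagonal ![1, α] ∈ Matrix.unitaryGroup (Fin 2) ℂ) :
    IsU1 ⟨Matrix.diagonal ![1, α], h⟩ := by
  refine ⟨α.arg, ?_⟩
  have := Complex.norm_mul_exp_arg_mul_I α
  rw [hα] at this
  simp only [Complex.ofReal_one, one_mul] at this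
  simp [this]

lemma diag_mem {α : ℂ} (hα : ‖α‖ = 1) :
    Matrix.diagonal ![1, α] ∈ Matrix.unitaryGroup (Fin 2) ℂ := by
  have hns : (starRingEnd ℂ) α * α = 1 := by
    rw [mul_comm, Complex.mul_conj]
    norm_cast
    rw [← Complex.sq_norm, hα, one_pow]
  have hns' : α * (starRingEnd ℂ) α = 1 := by rw [mul_comm]; exact hns
  refine mem_iff'.mpr ⟨?_, ?_⟩ <;>
  · ext i j
    fin_cases i <;> fin_cases j <;>
      simp [Matrix.mul_apply, Fin.sum_univ_two, Matrix.conjTranspose_apply,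
        Matrix.star_apply, Matrix.diagonal, Matrix.one_apply, hns, hns']

/-- KAK: the transpose of `u` lies in the same `U(1)`-double coset. -/
lemma exists_u1 (u : GU) : ∃ w₁ w₂ : GU, IsU1 w₁ ∧ IsU1 w₂ ∧ Tmap u = w₁ * u * w₂ := by
  set A : Matrix (Fin 2) (Fin 2) ℂ := (u : Matrix (Fin 2) (Fin 2) ℂ) with hA
  obtain ⟨h1, h2⟩ := mem_iff'.mp u.2
  have e1 := congrFun (congrFun h1 0) 0
  have e2 := congrFun (congrFun h2 0) 0
  simp only [Matrix.mul_apply, Fin.sum_univ_two, Matrix.conjTranspose_apply,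
    Matrix.star_apply, Complex.star_def, Matrix.one_apply_eq] at e1 e2
  have key : Complex.normSq (A 0 1) = Complex.normSq (A 1 0) := by
    have h01 : (Complex.normSq (A 0 1) : ℂ) = (Complex.normSq (A 1 0) : ℂ) := by
      have l1 : (Complex.normSq (A 0 0) : ℂ) + (Complex.normSq (A 1 0) : ℂ) = 1 := by
        rw [← Complex.mul_conj, ← Complex.mul_conj]
        linear_combination e1
      have l2 : (Complex.normSq (A 0 0) : ℂ) + (Complex.normSq (A 0 1) : ℂ) = 1 := by
        rw [← Complex.mul_conj, ← Complex.mul_conj]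
        linear_combination e2
      linear_combination l2 - l1
    exact_mod_cast h01
  by_cases hc : A 1 0 = 0
  · -- then A 0 1 = 0 too, and u is symmetric
    have hb : A 0 1 = 0 := by
      rw [← Complex.normSq_eq_zero, key, hc, map_zero]
    refine ⟨1, 1, isU1_one, isU1_one, ?_⟩
    apply Subtype.ext
    simp only [Submonoid.coe_mul, OneMemClass.coe_one, one_mul, mul_one, Tmap_coe]
    ext i j
    fin_cases i <;> fin_cases j <;> simp [Matrix.transpose_apply, hb, hc, ← hA]
  · have hb : A 0 1 ≠ 0 := by
      intro h
      apply hc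
      rw [← Complex.normSq_eq_zero, ← key, h, map_zero]
    have habs : ‖A 0 1‖ = ‖A 1 0‖ := by
      rw [Complex.norm_def, Complex.norm_def, key]
    have hα : ‖A 0 1 / A 1 0‖ = 1 := by
      rw [norm_div, habs, div_self]
      simpa using hc
    have hβ : ‖A 1 0 / A 0 1‖ = 1 := by
      rw [norm_div, habs, div_self]
      simpa using hc
    refine ⟨⟨_, diag_mem hα⟩, ⟨_, diag_mem hβ⟩, isU1_diag hα _, isU1_diag hβ _, ?_⟩
    apply Subtype.ext
    simp only [Submonoid.coe_mul, Tmap_coe]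
    ext i j
    fin_cases i <;> fin_cases j <;>
      simp [Matrix.mul_apply, Fin.sum_univ_two, Matrix.diagonal, Matrix.transpose_apply, ← hA] <;>
      field_simp <;> ring

end GelfandAux

theorem gelfand_pair_U2_U1
    (μ : Measure (Matrix.unitaryGroup (Fin 2) ℂ))
    [IsProbabilityMeasure μ] [μ.IsMulLeftInvariant]
    (f g : Matrix.unitaryGroup (Fin 2) ℂ → ℂ)
    (hf : Continuous f) (hg : Continuous g)
    (hfbi : ∀ (u w₁ w₂ : Matrix.unitaryGroup (Fin 2) ℂ), IsU1 w₁ → IsU1 w₂ →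
      f (w₁ * u * w₂) = f u)
    (hgbi : ∀ (u w₁ w₂ : Matrix.unitaryGroup (Fin 2) ℂ), IsU1 w₁ → IsU1 w₂ →
      g (w₁ * u * w₂) = g u) :
    ∀ u : Matrix.unitaryGroup (Fin 2) ℂ,
      ∫ v, f v * g (v⁻¹ * u) ∂μ = ∫ v, g v * f (v⁻¹ * u) ∂μ := by
  classical
  intro u
  open GelfandAux in
  -- μ is a Haar measure
  have hopen : μ.IsOpenPosMeasure :=
    isOpenPosMeasure_of_mulLeftInvariant_of_compact Set.univ isCompact_univ (by simp)
  have hhaar : μ.IsHaarMeasure := { hopen with }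
  -- μ is right invariant
  have hright : μ.IsMulRightInvariant := by
    constructor
    intro γ
    have h1 : (Measure.map (· * γ) μ).IsMulLeftInvariant := inferInstance
    have hprob : IsProbabilityMeasure (Measure.map (· * γ) μ) :=
      Measure.isProbabilityMeasure_map (continuous_mul_right γ).measurable.aemeasurable
    have hopen' : (Measure.map (· * γ) μ).IsOpenPosMeasure :=
      isOpenPosMeasure_of_mulLeftInvariant_of_compact Set.univ isCompact_univ (by simp)
    have h2 : (Measure.map (· * γ) μ).IsHaarMeasure := { hopen' with }
    exact Measure.isHaarMeasure_eq_of_isProbabilityMeasure _ μ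
  -- μ is inverse invariant
  have hinv : μ.IsInvInvariant := by
    constructor
    have h1 : (μ.inv).IsMulLeftInvariant := inferInstance
    have hprob : IsProbabilityMeasure μ.inv := by
      constructor
      rw [Measure.inv_apply]
      simp
    have hopen' : (μ.inv).IsOpenPosMeasure :=
      isOpenPosMeasure_of_mulLeftInvariant_of_compact Set.univ isCompact_univ
        (by rw [Measure.inv_apply]; simp)
    have h2 : (μ.inv).IsHaarMeasure := { hopen' with }
    exact Measure.isHaarMeasure_eq_of_isProbabilityMeasure _ μ
  -- the transpose preserves μ
  have hT : MeasurePreserving Tmap μ μ := by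
    refine ⟨continuous_Tmap.measurable, ?_⟩
    have h1 : (Measure.map Tmap μ).IsMulLeftInvariant := by
      constructor
      intro γ
      rw [Measure.map_map (continuous_mul_left γ).measurable continuous_Tmap.measurable]
      have hcomp : ((γ * ·) ∘ Tmap) = Tmap ∘ (· * Tmap γ) := by
        funext v
        simp only [Function.comp_apply]
        rw [Tmap_mul, Tmap_Tmap]
      rw [hcomp, ← Measure.map_map continuous_Tmap.measurable
        (continuous_mul_right (Tmap γ)).measurable,
        map_mul_right_eq_self]
    have hprob : IsProbabilityMeasure (Measure.map Tmap μ) :=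
      Measure.isProbabilityMeasure_map continuous_Tmap.measurable.aemeasurable
    have hopen' : (Measure.map Tmap μ).IsOpenPosMeasure :=
      isOpenPosMeasure_of_mulLeftInvariant_of_compact Set.univ isCompact_univ (by simp)
    have h2 : (Measure.map Tmap μ).IsHaarMeasure := { hopen' with }
    exact Measure.isHaarMeasure_eq_of_isProbabilityMeasure _ μ
  -- f and g are invariant under transpose
  have hfT : ∀ v, f (Tmap v) = f v := by
    intro v
    obtain ⟨w₁, w₂, hw₁, hw₂, hvw⟩ := exists_u1 v
    rw [hvw, hfbi v w₁ w₂ hw₁ hw₂]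
  have hgT : ∀ v, g (Tmap v) = g v := by
    intro v
    obtain ⟨w₁, w₂, hw₁, hw₂, hvw⟩ := exists_u1 v
    rw [hvw, hgbi v w₁ w₂ hw₁ hw₂]
  obtain ⟨w₁, w₂, hw₁, hw₂, hTu⟩ := exists_u1 u
  calc ∫ v, f v * g (v⁻¹ * u) ∂μ
      = ∫ v, f (u * v) * g ((u * v)⁻¹ * u) ∂μ :=
        (integral_mul_left_eq_self (fun v => f v * g (v⁻¹ * u)) u).symm
    _ = ∫ v, f (u * v) * g v⁻¹ ∂μ := by
        congr 1
        funext v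
        rw [mul_inv_rev, inv_mul_cancel_right]
    _ = ∫ v, f (u * v⁻¹) * g v⁻¹⁻¹ ∂μ :=
        (integral_inv_eq_self (fun v => f (u * v) * g v⁻¹) μ).symm
    _ = ∫ v, f ((Tmap v)⁻¹ * Tmap u) * g v ∂μ := by
        congr 1
        funext v
        rw [inv_inv, ← hfT (u * v⁻¹), Tmap_mul, Tmap_inv]
    _ = ∫ v, f ((Tmap (Tmap v))⁻¹ * Tmap u) * g (Tmap v) ∂μ :=
        (hT.integral_comp (Homeomorph.measurableEmbedding Thomeo)
          (fun v => f ((Tmap v)⁻¹ * Tmap u) * g v)).symm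
    _ = ∫ v, g v * f (v⁻¹ * Tmap u) ∂μ := by
        congr 1
        funext v
        rw [Tmap_Tmap, hgT, mul_comm]
    _ = ∫ v, g v * f ((v⁻¹ * w₁ * u) * w₂) ∂μ := by
        congr 1
        funext v
        rw [hTu]
        ring_nf
        congr 1
        congr 1
        group
    _ = ∫ v, g v * f (v⁻¹ * w₁ * u) ∂μ := by
        congr 1
        funext v
        rw [← hfbi (v⁻¹ * w₁ * u) 1 w₂ isU1_one hw₂, one_mul]
    _ = ∫ v, g (w₁ * v) * f ((w₁ * v)⁻¹ * w₁ * u) ∂μ :=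
        (integral_mul_left_eq_self (fun v => g v * f (v⁻¹ * w₁ * u)) w₁).symm
    _ = ∫ v, g v * f (v⁻¹ * u) ∂μ := by
        congr 1
        funext v
        rw [mul_inv_rev, inv_mul_cancel_right, ← hgbi v w₁ 1 hw₁ isU1_one, mul_one]
end
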